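/- arXiv:1903.12612 — 10 statements merged into one kernel-verified Lean document; each statement's English description precedes it below -/
import Mathlib

section
/- Let V be a finite-dimensional complex vector space, I a finite set with a total order ≤, F an I-filtration of V, and Γ₀ an I-grading of V splitting F. Let U(F) = { g ∈ GL(V) : (g − 1)(F(i)) ⊆ F(<i) for all i ∈ I }. Then the map g ↦ (i ↦ g(Γ₀(i))) is a bijection from U(F) onto the set of all I-gradings of V that split F. In particular, for every I-grading Γ splitting F there is a unique g ∈ GL(V) with (g − 1)(F(i)) ⊆ F(<i) for all i and g(Γ₀(i)) = Γ(i) for all i. -/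
open Submodule

variable {V : Type} [AddCommGroup V] [Module ℂ V] [FiniteDimensional ℂ V]
variable {I : Type} [Fintype I]

/-- `Γ` is an `I`-grading of `V`: the family of subspaces is independent and spans `V`,
so that `V` is their internal direct sum. -/
def IsGrading (Γ : I → Submodule ℂ V) : Prop :=
  iSupIndep Γ ∧ ⨆ i, Γ i = ⊤

/-- The filtration associated to a grading `Γ` and an order `le` on `I`:
`F(Γ,≤)(i) = Σ_{j ≤ i} Γ(j)`. -/
def assocFilt (Γ : I → Submodule ℂ V) (le : I → I → Prop) (i : I) : Submodule ℂ V :=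
  ⨆ j ∈ {j | le j i}, Γ j

/-- `F` is an `I`-filtration of `V` with respect to the order `le`. -/
def IsIFiltration (le : I → I → Prop) (F : I → Submodule ℂ V) : Prop :=
  ∀ i j, le i j → F i ≤ F j

/-- `F(<i) = Σ_{j < i} F(j)`, where `j < i` means `j ≤ i` and `j ≠ i`. -/
def filtLT (le : I → I → Prop) (F : I → Submodule ℂ V) (i : I) : Submodule ℂ V :=
  ⨆ j ∈ {j | le j i ∧ j ≠ i}, F j

/-- The grading `Γ` splits the filtration `F` (with respect to `le`). -/
def SplitsF (le : I → I → Prop) (F Γ : I → Submodule ℂ V) : Prop :=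
  IsGrading Γ ∧ ∀ i, F i = assocFilt Γ le i

/-- The unipotent radical `U(F)` of the parabolic subgroup attached to the filtration `F`:
all `g ∈ GL(V)` with `(g − 1)(F(i)) ⊆ F(<i)` for all `i`. -/
def Ugrp (le : I → I → Prop) (F : I → Submodule ℂ V) : Set (V ≃ₗ[ℂ] V) :=
  {g | ∀ i, ∀ v ∈ F i, g v - v ∈ filtLT le F i}

/-! ### Auxiliary lemmas -/

private lemma biSup_ind {ι : Type} (p : ι → Submodule ℂ V) (s : Set ι) {C : V → Prop}
    {x : V} (hx : x ∈ ⨆ j ∈ s, p j)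
    (mem : ∀ j ∈ s, ∀ y ∈ p j, C y) (zero : C 0)
    (add : ∀ y z, C y → C z → C (y + z)) : C x := by
  refine Submodule.iSup_induction (motive := C) (fun j => ⨆ _ : j ∈ s, p j) hx ?_ zero add
  intro j y hy
  by_cases hj : j ∈ s
  · exact mem j hj y (by simpa [iSup_pos hj] using hy)
  · change y ∈ ⨆ _ : j ∈ s, p j at hy
    rw [iSup_neg hj, Submodule.mem_bot] at hy
    simpa [hy] using zero

private lemma grading_isCompl (Γ : I → Submodule ℂ V) (h : IsGrading Γ) (i : I) :
    IsCompl (Γ i) (⨆ j ∈ {j | j ≠ i}, Γ j) := by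
  refine ⟨h.1 i, codisjoint_iff.mpr (top_unique ?_)⟩
  rw [← h.2]
  refine iSup_le fun j => ?_
  by_cases hj : j = i
  · subst hj; exact le_sup_left
  · exact le_trans (le_iSup₂ (f := fun j _ => Γ j) j hj) le_sup_right

private noncomputable def gproj (Γ : I → Submodule ℂ V) (h : IsGrading Γ) (i : I) :
    V →ₗ[ℂ] V :=
  (Γ i).subtype ∘ₗ (Γ i).projectionOnto _ (grading_isCompl Γ h i)

private lemma gproj_mem (Γ : I → Submodule ℂ V) (h : IsGrading Γ) (i : I) (v : V) :
    gproj Γ h i v ∈ Γ i :=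
  ((Γ i).projectionOnto _ (grading_isCompl Γ h i) v).2

private lemma gproj_self (Γ : I → Submodule ℂ V) (h : IsGrading Γ) (i : I) {v : V}
    (hv : v ∈ Γ i) : gproj Γ h i v = v := by
  simpa [gproj] using congrArg Subtype.val
    (Submodule.projectionOnto_apply_left (grading_isCompl Γ h i) ⟨v, hv⟩)

private lemma gproj_zero (Γ : I → Submodule ℂ V) (h : IsGrading Γ) (i : I) {v : V}
    (hv : v ∈ ⨆ j ∈ {j | j ≠ i}, Γ j) : gproj Γ h i v = 0 := by
  simpa [gproj] using congrArg Subtype.val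
    (Submodule.projectionOnto_apply_of_mem_right (grading_isCompl Γ h i) hv)

private lemma gproj_ne (Γ : I → Submodule ℂ V) (h : IsGrading Γ) {i j : I} {v : V}
    (hv : v ∈ Γ j) (hji : j ≠ i) : gproj Γ h i v = 0 :=
  gproj_zero Γ h i (le_iSup₂ (f := fun j _ => Γ j) j hji hv)

private lemma sub_gproj_mem (Γ : I → Submodule ℂ V) (h : IsGrading Γ) (s : Set I) (i : I)
    {v : V} (hv : v ∈ ⨆ j ∈ s, Γ j) :
    v - gproj Γ h i v ∈ ⨆ j ∈ s \ {i}, Γ j := by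
  refine biSup_ind Γ s (C := fun v => v - gproj Γ h i v ∈ ⨆ j ∈ s \ {i}, Γ j) hv ?_ (by simp) ?_
  · intro j hj y hy
    by_cases hji : j = i
    · subst hji
      simp [gproj_self Γ h j hy]
    · rw [gproj_ne Γ h hy hji, sub_zero]
      exact le_iSup₂ (f := fun j _ => Γ j) j ⟨hj, hji⟩ hy
  · intro y z hy hz
    have hrw : (y + z) - gproj Γ h i (y + z)
        = (y - gproj Γ h i y) + (z - gproj Γ h i z) := by
      rw [map_add]; abel
    rw [hrw]; exact add_mem hy hz

private lemma grading_le_F (le : I → I → Prop) (hle : IsLinearOrder I le)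
    (F Γ : I → Submodule ℂ V) (hΓ : SplitsF le F Γ) (i : I) : Γ i ≤ F i := by
  rw [hΓ.2 i]
  show Γ i ≤ ⨆ j ∈ {j | le j i}, Γ j
  exact le_iSup₂ (f := fun j (_ : j ∈ {j | le j i}) => Γ j) i
    (hle.toIsPartialOrder.toIsPreorder.toRefl.refl i)

private lemma filtLT_eq (le : I → I → Prop) (hle : IsLinearOrder I le)
    (F Γ : I → Submodule ℂ V) (hΓ : SplitsF le F Γ) (i : I) :
    filtLT le F i = ⨆ j ∈ {j | le j i ∧ j ≠ i}, Γ j := by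
  have htrans : ∀ {a b c}, le a b → le b c → le a c :=
    fun hab hbc => hle.toIsPartialOrder.toIsPreorder.toIsTrans.trans _ _ _ hab hbc
  have hanti : ∀ {a b}, le a b → le b a → a = b :=
    fun hab hba => hle.toIsPartialOrder.toAntisymm.antisymm _ _ hab hba
  apply le_antisymm
  · refine iSup₂_le fun j hj => ?_
    rw [hΓ.2 j]
    show (⨆ k ∈ {k | le k j}, Γ k) ≤ _
    refine iSup₂_le fun k hk => ?_
    refine le_iSup₂ (f := fun j _ => Γ j) k ⟨htrans hk hj.1, fun hki => ?_⟩
    exact hj.2 (hanti hj.1 (hki ▸ hk))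
  · refine iSup₂_le fun j hj => ?_
    exact le_trans (grading_le_F le hle F Γ hΓ j) (le_iSup₂ (f := fun j _ => F j) j hj)

private lemma filtLT_le_F (le : I → I → Prop) (F : I → Submodule ℂ V)
    (hF : IsIFiltration le F) (i : I) : filtLT le F i ≤ F i :=
  iSup₂_le fun j hj => hF j i hj.1

private lemma mapsTo_splits (le : I → I → Prop) (hle : IsLinearOrder I le)
    (F Γ₀ : I → Submodule ℂ V) (hF : IsIFiltration le F) (hΓ₀ : SplitsF le F Γ₀)
    (g : V ≃ₗ[ℂ] V) (hg : g ∈ Ugrp le F) :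
    SplitsF le F (fun i => (Γ₀ i).map (g : V →ₗ[ℂ] V)) := by
  have hmap : ∀ i, ((F i).map (g : V →ₗ[ℂ] V)) = F i := by
    intro i
    apply Submodule.eq_of_le_of_finrank_le
    · rintro x ⟨v, hv, rfl⟩
      have h1 : g v - v ∈ filtLT le F i := hg i v hv
      rw [show (g : V →ₗ[ℂ] V) v = v + (g v - v) by simp]
      exact add_mem hv (filtLT_le_F le F hF i h1)
    · rw [LinearEquiv.finrank_map_eq]
  have hinj : Function.Injective (g : V →ₗ[ℂ] V) := by
    simpa using g.injective
  refine ⟨⟨?_, ?_⟩, ?_⟩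
  · intro i
    rw [disjoint_iff]
    have hsup : (⨆ j ≠ i, (Γ₀ j).map (g : V →ₗ[ℂ] V))
        = ((⨆ j ≠ i, Γ₀ j)).map (g : V →ₗ[ℂ] V) := by
      simp [Submodule.map_iSup]
    rw [hsup, ← Submodule.map_inf _ hinj, disjoint_iff.mp (hΓ₀.1.1 i), Submodule.map_bot]
  · rw [← Submodule.map_iSup, hΓ₀.1.2, Submodule.map_top]
    simpa using g.surjective
  · intro i
    show F i = ⨆ j ∈ {j | le j i}, (Γ₀ j).map (g : V →ₗ[ℂ] V)
    calc F i = (F i).map (g : V →ₗ[ℂ] V) := (hmap i).symm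
      _ = ((⨆ j ∈ {j | le j i}, Γ₀ j)).map (g : V →ₗ[ℂ] V) := by
          rw [show F i = assocFilt Γ₀ le i from hΓ₀.2 i]; rfl
      _ = ⨆ j ∈ {j | le j i}, (Γ₀ j).map (g : V →ₗ[ℂ] V) := by
          simp [Submodule.map_iSup]

private lemma ugrp_inj (le : I → I → Prop) (hle : IsLinearOrder I le)
    (F Γ₀ : I → Submodule ℂ V) (hF : IsIFiltration le F) (hΓ₀ : SplitsF le F Γ₀)
    (g g' : V ≃ₗ[ℂ] V) (hg : g ∈ Ugrp le F) (hg' : g' ∈ Ugrp le F)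
    (heq : ∀ i, (Γ₀ i).map (g : V →ₗ[ℂ] V) = (Γ₀ i).map (g' : V →ₗ[ℂ] V)) : g = g' := by
  set Γ : I → Submodule ℂ V := fun i => (Γ₀ i).map (g : V →ₗ[ℂ] V) with hΓdef
  have hΓ : SplitsF le F Γ := mapsTo_splits le hle F Γ₀ hF hΓ₀ g hg
  have key : ∀ i, ∀ v ∈ Γ₀ i, g v = g' v := by
    intro i v hv
    have hvF : v ∈ F i := grading_le_F le hle F Γ₀ hΓ₀ i hv
    have h1 : g v - v ∈ filtLT le F i := hg i v hvF
    have h2 : g' v - v ∈ filtLT le F i := hg' i v hvF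
    have hd : g v - g' v ∈ filtLT le F i := by
      have := sub_mem h1 h2
      simpa using this
    have hm1 : g v ∈ Γ i := ⟨v, hv, rfl⟩
    have hm2 : g' v ∈ Γ i := by
      have h3 : g' v ∈ (Γ₀ i).map (g' : V →ₗ[ℂ] V) := ⟨v, hv, rfl⟩
      rwa [← heq i] at h3
    have hmem : g v - g' v ∈ Γ i := sub_mem hm1 hm2
    have hdisj : Disjoint (Γ i) (filtLT le F i) := by
      rw [filtLT_eq le hle F Γ hΓ i]
      exact (hΓ.1.1 i).mono_right
        (iSup₂_le fun j hj => le_iSup₂ (f := fun j _ => Γ j) j hj.2)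
    have h0 : g v - g' v = 0 := (Submodule.disjoint_def.mp hdisj) _ hmem hd
    exact sub_eq_zero.mp h0
  have hloc : (⊤ : Submodule ℂ V) ≤ LinearMap.eqLocus (g : V →ₗ[ℂ] V) (g' : V →ₗ[ℂ] V) := by
    rw [← hΓ₀.1.2]
    refine iSup_le fun i v hv => ?_
    simpa [LinearMap.mem_eqLocus] using key i v hv
  exact LinearEquiv.ext fun v => by simpa [LinearMap.mem_eqLocus] using hloc (mem_top : v ∈ ⊤)

private lemma exists_ugrp (le : I → I → Prop) (hle : IsLinearOrder I le)
    (F Γ₀ : I → Submodule ℂ V) (hF : IsIFiltration le F) (hΓ₀ : SplitsF le F Γ₀)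
    (Γ : I → Submodule ℂ V) (hΓ : SplitsF le F Γ) :
    ∃ g : V ≃ₗ[ℂ] V, g ∈ Ugrp le F ∧ ∀ i, (Γ₀ i).map (g : V →ₗ[ℂ] V) = Γ i := by
  have htrans : ∀ {a b c}, le a b → le b c → le a c :=
    fun hab hbc => hle.toIsPartialOrder.toIsPreorder.toIsTrans.trans _ _ _ hab hbc
  have hanti : ∀ {a b}, le a b → le b a → a = b :=
    fun hab hba => hle.toIsPartialOrder.toAntisymm.antisymm _ _ hab hba
  have h0 : IsGrading Γ₀ := hΓ₀.1
  have h1 : IsGrading Γ := hΓ.1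
  set gm : V →ₗ[ℂ] V := ∑ i : I, (gproj Γ h1 i) ∘ₗ (gproj Γ₀ h0 i) with hgm
  -- value of gm on elements of Γ₀ k
  have hgm_apply : ∀ k : I, ∀ v ∈ Γ₀ k, gm v = gproj Γ h1 k v := by
    intro k v hv
    rw [hgm, LinearMap.sum_apply]
    rw [Finset.sum_eq_single k]
    · simp [gproj_self Γ₀ h0 k hv]
    · intro i _ hik
      simp [gproj_ne Γ₀ h0 hv (Ne.symm hik)]
    · simp
  -- gm satisfies the unipotence condition
  have hU : ∀ i, ∀ v ∈ F i, gm v - v ∈ filtLT le F i := by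
    intro i v hv
    rw [hΓ₀.2 i] at hv
    refine biSup_ind Γ₀ {j | le j i}
      (C := fun v => gm v - v ∈ filtLT le F i) hv ?_ (by simp) ?_
    · intro j hj y hy
      have hy' : y ∈ ⨆ k ∈ {k | le k j}, Γ k := by
        have : y ∈ F j := grading_le_F le hle F Γ₀ hΓ₀ j hy
        rwa [hΓ.2 j] at this
      have hw : y - gproj Γ h1 j y ∈ ⨆ k ∈ {k | le k j} \ {j}, Γ k :=
        sub_gproj_mem Γ h1 _ j hy'
      have hle' : (⨆ k ∈ {k | le k j} \ {j}, Γ k) ≤ filtLT le F i := by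
        refine iSup₂_le fun k hk => ?_
        refine le_trans (grading_le_F le hle F Γ hΓ k)
          (le_iSup₂ (f := fun j (_ : j ∈ {j | le j i ∧ j ≠ i}) => F j) k
            ⟨htrans hk.1 hj, fun hki => hk.2 ?_⟩)
        have hkj : le k j := hk.1
        subst hki
        exact (hanti hj hkj) ▸ rfl
      have : gm y - y = -(y - gproj Γ h1 j y) := by
        rw [hgm_apply j y hy]; abel
      rw [this]
      exact neg_mem (hle' hw)
    · intro y z hy hz
      have : gm (y + z) - (y + z) = (gm y - y) + (gm z - z) := by rw [map_add]; abel
      rw [this]; exact add_mem hy hz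
  -- gm maps Γ₀ k onto Γ k
  have hsurj_k : ∀ k : I, ∀ u ∈ Γ k, ∃ v ∈ Γ₀ k, gm v = u := by
    intro k u hu
    have huF : u ∈ ⨆ j ∈ {j | le j k}, Γ₀ j := by
      have : u ∈ F k := grading_le_F le hle F Γ hΓ k hu
      rwa [hΓ₀.2 k] at this
    set v := gproj Γ₀ h0 k u with hvdef
    have hv : v ∈ Γ₀ k := gproj_mem Γ₀ h0 k u
    have hw : u - v ∈ ⨆ j ∈ {j | le j k} \ {k}, Γ₀ j := sub_gproj_mem Γ₀ h0 _ k huF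
    have hwle : (⨆ j ∈ {j | le j k} \ {k}, Γ₀ j) ≤ ⨆ j ∈ {j | j ≠ k}, Γ j := by
      refine iSup₂_le fun j hj => ?_
      have hjF : Γ₀ j ≤ F j := grading_le_F le hle F Γ₀ hΓ₀ j
      refine hjF.trans ?_
      rw [hΓ.2 j]
      show (⨆ m ∈ {m | le m j}, Γ m) ≤ _
      refine iSup₂_le fun m hm => ?_
      refine le_iSup₂ (f := fun j (_ : j ∈ {j | j ≠ k}) => Γ j) m fun hmk => ?_
      exact hj.2 (hanti hj.1 (hmk ▸ hm))
    have hproj_w : gproj Γ h1 k (u - v) = 0 := gproj_zero Γ h1 k (hwle hw)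
    refine ⟨v, hv, ?_⟩
    have : gproj Γ h1 k v = u := by
      have := gproj_self Γ h1 k hu
      have hsub : gproj Γ h1 k u - gproj Γ h1 k v = 0 := by
        rw [← map_sub]; exact hproj_w
      rw [sub_eq_zero] at hsub
      rw [← hsub, this]
    rw [hgm_apply k v hv, this]
  -- gm is bijective
  have hrange : LinearMap.range gm = ⊤ := by
    rw [← top_le_iff, ← h1.2]
    refine iSup_le fun k u hu => ?_
    obtain ⟨v, _, hgv⟩ := hsurj_k k u hu
    exact ⟨v, hgv⟩
  have hsurj : Function.Surjective gm := LinearMap.range_eq_top.mp hrange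
  have hinj : Function.Injective gm := LinearMap.injective_iff_surjective.mpr hsurj
  set g : V ≃ₗ[ℂ] V := LinearEquiv.ofBijective gm ⟨hinj, hsurj⟩ with hgdef
  have hgcoe : ∀ v, g v = gm v := fun v => rfl
  refine ⟨g, ?_, ?_⟩
  · intro i v hv
    have := hU i v hv
    simpa [hgcoe v] using this
  · intro i
    apply le_antisymm
    · rintro x ⟨v, hv, rfl⟩
      show g v ∈ Γ i
      rw [hgcoe v, hgm_apply i v hv]
      exact gproj_mem Γ h1 i v
    · intro u hu
      obtain ⟨v, hv, hgv⟩ := hsurj_k i u hu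
      exact ⟨v, hv, by rw [← hgv]; exact (hgcoe v).symm ▸ rfl⟩

/-- given a grading `Γ₀` splitting `F`, the map `g ↦ (i ↦ g(Γ₀(i)))` is a
bijection from `U(F)` onto the set of all `I`-gradings of `V` splitting `F`; in particular,
every grading splitting `F` is of the form `g(Γ₀)` for a unique `g ∈ U(F)`. -/
theorem splittings_torsor_under_unipotent_radical
    (le : I → I → Prop) (hle : IsLinearOrder I le)
    (F Γ₀ : I → Submodule ℂ V) (hF : IsIFiltration le F) (hΓ₀ : SplitsF le F Γ₀) :
    Set.BijOn (fun (g : V ≃ₗ[ℂ] V) => fun i => (Γ₀ i).map (g : V →ₗ[ℂ] V))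
      (Ugrp le F) {Γ | SplitsF le F Γ} ∧
    ∀ Γ : I → Submodule ℂ V, SplitsF le F Γ →
      ∃! g : V ≃ₗ[ℂ] V, g ∈ Ugrp le F ∧ ∀ i, (Γ₀ i).map (g : V →ₗ[ℂ] V) = Γ i := by
  constructor
  · refine ⟨fun g hg => mapsTo_splits le hle F Γ₀ hF hΓ₀ g hg, ?_, ?_⟩
    · intro g hg g' hg' h
      exact ugrp_inj le hle F Γ₀ hF hΓ₀ g g' hg hg' (fun i => congrFun h i)
    · intro Γ hΓ
      obtain ⟨g, hg, hmap⟩ := exists_ugrp le hle F Γ₀ hF hΓ₀ Γ hΓ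
      exact ⟨g, hg, funext hmap⟩
  · intro Γ hΓ
    obtain ⟨g, hg, hmap⟩ := exists_ugrp le hle F Γ₀ hF hΓ₀ Γ hΓ
    refine ⟨g, ⟨hg, hmap⟩, ?_⟩
    rintro g' ⟨hg', hmap'⟩
    exact ugrp_inj le hle F Γ₀ hF hΓ₀ g' g hg' hg
      (fun i => (hmap' i).trans (hmap i).symm)
end

section
/- Let V be a finite-dimensional complex vector space and I a finite set carrying two total orders ≤₁ and ≤₂. Let F₁ be an I-filtration of V for ≤₁ and F₂ an I-filtration of V for ≤₂, and suppose the I-gradings Γ₁ and Γ₂ of V both split F₁ (for ≤₁) and both split F₂ (for ≤₂). If g₁ ∈ GL(V) satisfies g₁(Γ₁(i)) = Γ₂(i) for all i and (g₁ − 1)(F₁(i)) ⊆ F₁(<₁ i) for all i, and g₂ ∈ GL(V) satisfies g₂(Γ₁(i)) = Γ₂(i) for all i and (g₂ − 1)(F₂(i)) ⊆ F₂(<₂ i) for all i, then g₁ = g₂. (The wild monodromy of a pair of compatible gradings does not depend on the choice of filtration split by both.) -/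
open Submodule

variable {V : Type} [AddCommGroup V] [Module ℂ V] [FiniteDimensional ℂ V]
variable {I : Type} [Fintype I]

/-- `F` is an `I`-filtration of `V` with respect to the order `le`. -/
def IsFiltrationLE (le : I → I → Prop) (F : I → Submodule ℂ V) : Prop :=
  ∀ i j, le i j → F i ≤ F j

/-- the wild monodromy of a pair of compatible gradings does not depend on the
choice of the filtration split by both gradings. -/
theorem wild_monodromy_independent_of_filtration
    (le₁ le₂ : I → I → Prop) (hle₁ : IsLinearOrder I le₁) (hle₂ : IsLinearOrder I le₂)
    (F₁ F₂ Γ₁ Γ₂ : I → Submodule ℂ V)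
    (hF₁ : IsFiltrationLE le₁ F₁) (hF₂ : IsFiltrationLE le₂ F₂)
    (hΓ₁F₁ : SplitsF le₁ F₁ Γ₁) (hΓ₂F₁ : SplitsF le₁ F₁ Γ₂)
    (hΓ₁F₂ : SplitsF le₂ F₂ Γ₁) (hΓ₂F₂ : SplitsF le₂ F₂ Γ₂)
    (g₁ g₂ : V ≃ₗ[ℂ] V)
    (hg₁Γ : ∀ i, (Γ₁ i).map (g₁ : V →ₗ[ℂ] V) = Γ₂ i) (hg₁ : g₁ ∈ Ugrp le₁ F₁)
    (hg₂Γ : ∀ i, (Γ₁ i).map (g₂ : V →ₗ[ℂ] V) = Γ₂ i) (hg₂ : g₂ ∈ Ugrp le₂ F₂) :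
    g₁ = g₂ := by
  have key : ∀ i, ∀ v ∈ Γ₁ i, (g₁ : V →ₗ[ℂ] V) v = (g₂ : V →ₗ[ℂ] V) v := by
    intro i v hv
    have hΓ₂ind := hΓ₂F₁.1.1
    have h1 : (g₁ : V →ₗ[ℂ] V) v ∈ Γ₂ i := by
      rw [← hg₁Γ i]; exact Submodule.mem_map_of_mem hv
    have h2 : (g₂ : V →ₗ[ℂ] V) v ∈ Γ₂ i := by
      rw [← hg₂Γ i]; exact Submodule.mem_map_of_mem hv
    have hvF₁ : v ∈ F₁ i := by
      rw [hΓ₁F₁.2 i]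
      show v ∈ ⨆ j, ⨆ (_ : j ∈ {j | le₁ j i}), Γ₁ j
      exact Submodule.mem_iSup_of_mem i (Submodule.mem_iSup_of_mem
        (hle₁.toIsPartialOrder.toIsPreorder.toRefl.refl i) hv)
    have hvF₂ : v ∈ F₂ i := by
      rw [hΓ₁F₂.2 i]
      show v ∈ ⨆ j, ⨆ (_ : j ∈ {j | le₂ j i}), Γ₁ j
      exact Submodule.mem_iSup_of_mem i (Submodule.mem_iSup_of_mem
        (hle₂.toIsPartialOrder.toIsPreorder.toRefl.refl i) hv)
    have sub1 : filtLT le₁ F₁ i ≤ ⨆ j, ⨆ (_ : j ≠ i), Γ₂ j := by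
      refine iSup₂_le fun j hj => ?_
      rw [hΓ₂F₁.2 j]
      refine iSup₂_le fun k hk => ?_
      have hkne : k ≠ i := by
        rintro rfl
        exact hj.2 (hle₁.toIsPartialOrder.toAntisymm.antisymm _ _ hj.1 hk)
      exact le_iSup₂_of_le k hkne le_rfl
    have sub2 : filtLT le₂ F₂ i ≤ ⨆ j, ⨆ (_ : j ≠ i), Γ₂ j := by
      refine iSup₂_le fun j hj => ?_
      rw [hΓ₂F₂.2 j]
      refine iSup₂_le fun k hk => ?_
      have hkne : k ≠ i := by
        rintro rfl
        exact hj.2 (hle₂.toIsPartialOrder.toAntisymm.antisymm _ _ hj.1 hk)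
      exact le_iSup₂_of_le k hkne le_rfl
    have e1 : (g₁ : V →ₗ[ℂ] V) v - v ∈ filtLT le₁ F₁ i := hg₁ i v hvF₁
    have e2 : (g₂ : V →ₗ[ℂ] V) v - v ∈ filtLT le₂ F₂ i := hg₂ i v hvF₂
    have hd : (g₁ : V →ₗ[ℂ] V) v - (g₂ : V →ₗ[ℂ] V) v
        ∈ ⨆ j, ⨆ (_ : j ≠ i), Γ₂ j := by
      have := sub_mem (sub1 e1) (sub2 e2)
      simpa using this
    have hz : (g₁ : V →ₗ[ℂ] V) v - (g₂ : V →ₗ[ℂ] V) v = 0 := by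
      have := (hΓ₂ind i).le_bot ⟨sub_mem h1 h2, hd⟩
      simpa using this
    exact sub_eq_zero.mp hz
  have hall : ∀ v : V, (g₁ : V →ₗ[ℂ] V) v = (g₂ : V →ₗ[ℂ] V) v := by
    intro v
    have hv : v ∈ ⨆ i, Γ₁ i := by rw [hΓ₁F₁.1.2]; trivial
    refine Submodule.iSup_induction _ (motive := fun x => (g₁ : V →ₗ[ℂ] V) x = (g₂ : V →ₗ[ℂ] V) x)
      hv (fun i x hx => key i x hx) (by simp) ?_
    intro x y hx hy
    simp [map_add, hx, hy]
  exact LinearEquiv.toLinearMap_injective (LinearMap.ext hall)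
end

section
/- Let V be a finite-dimensional complex vector space and I a finite set carrying two total orders ≤₁ and ≤₂. Let F₁ be an I-filtration of V for ≤₁ and F₂ an I-filtration of V for ≤₂, and let Γ₀ be an I-grading of V splitting both F₁ and F₂. Then the map g ↦ (i ↦ g(Γ₀(i))) is a bijection from the group U(F₁) ∩ U(F₂) = { g ∈ GL(V) : (g − 1)(F₁(i)) ⊆ F₁(<₁ i) and (g − 1)(F₂(i)) ⊆ F₂(<₂ i) for all i } onto the set of I-gradings of V that split both F₁ and F₂. -/
open Submodule

variable {V : Type} [AddCommGroup V] [Module ℂ V] [FiniteDimensional ℂ V]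
variable {I : Type} [Fintype I]

/-- `F` is an `I`-filtration of `V` with respect to the order `le`. -/
def IsFiltrationI (le : I → I → Prop) (F : I → Submodule ℂ V) : Prop :=
  ∀ i j, le i j → F i ≤ F j

section Aux
variable [DecidableEq I]
set_option linter.unusedSectionVars false
namespace DSTaux

/-- Projection onto the `i`-th component of an internal direct sum decomposition. -/
noncomputable def gproj {Γ : I → Submodule ℂ V} (h : DirectSum.IsInternal Γ) (i : I) :
    V →ₗ[ℂ] V :=
  (Γ i).subtype ∘ₗ (DirectSum.component ℂ I (fun j => ↥(Γ j)) i) ∘ₗ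
    (LinearEquiv.ofBijective (DirectSum.coeLinearMap Γ) h).symm.toLinearMap

lemma gproj_apply {Γ : I → Submodule ℂ V} (h : DirectSum.IsInternal Γ) (i : I) (v : V) :
    gproj h i v = ((LinearEquiv.ofBijective (DirectSum.coeLinearMap Γ) h).symm v i : V) :=
  rfl

lemma gproj_mem {Γ : I → Submodule ℂ V} (h : DirectSum.IsInternal Γ) (i : I) (v : V) :
    gproj h i v ∈ Γ i :=
  ((LinearEquiv.ofBijective (DirectSum.coeLinearMap Γ) h).symm v i).2

lemma gproj_of_mem {Γ : I → Submodule ℂ V} (h : DirectSum.IsInternal Γ) {i : I} {v : V}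
    (hv : v ∈ Γ i) : gproj h i v = v := by
  rw [gproj_apply, h.ofBijective_coeLinearMap_of_mem hv]

lemma gproj_of_mem_ne {Γ : I → Submodule ℂ V} (h : DirectSum.IsInternal Γ) {i j : I}
    (hij : i ≠ j) {v : V} (hv : v ∈ Γ i) : gproj h j v = 0 := by
  rw [gproj_apply, h.ofBijective_coeLinearMap_of_mem_ne hij hv]
  rfl

lemma sum_gproj {Γ : I → Submodule ℂ V} (h : DirectSum.IsInternal Γ) (v : V) :
    ∑ i, gproj h i v = v := by
  have hmem : v ∈ (⊤ : Submodule ℂ V) := trivial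
  rw [← h.submodule_iSup_eq_top] at hmem
  refine Submodule.iSup_induction (motive := fun w => ∑ i, gproj h i w = w) Γ hmem ?_ ?_ ?_
  · intro j w hw
    rw [Finset.sum_eq_single j (fun i _ hij => gproj_of_mem_ne h (Ne.symm hij) hw)
      (fun hj => absurd (Finset.mem_univ j) hj)]
    exact gproj_of_mem h hw
  · simp
  · intro x y hx hy
    simp only [map_add, Finset.sum_add_distrib, hx, hy]

lemma mem_biSup_iff {Γ : I → Submodule ℂ V} (h : DirectSum.IsInternal Γ) {S : Set I} {v : V} :
    v ∈ (⨆ j ∈ S, Γ j) ↔ ∀ j ∉ S, gproj h j v = 0 := by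
  constructor
  · intro hv j hjS
    have hle : (⨆ k ∈ S, Γ k) ≤ LinearMap.ker (gproj h j) := by
      refine iSup₂_le fun k hk => fun w hw => ?_
      have hkj : k ≠ j := by rintro rfl; exact hjS hk
      exact gproj_of_mem_ne h hkj hw
    exact hle hv
  · intro h0
    rw [← sum_gproj h v]
    refine Submodule.sum_mem _ fun j _ => ?_
    by_cases hj : j ∈ S
    · exact Submodule.mem_iSup_of_mem j (Submodule.mem_iSup_of_mem hj (gproj_mem h j v))
    · rw [h0 j hj]; exact zero_mem _

lemma biSup_inf_biSup {Γ : I → Submodule ℂ V} (h : DirectSum.IsInternal Γ) (S T : Set I) :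
    (⨆ j ∈ S, Γ j) ⊓ (⨆ j ∈ T, Γ j) = ⨆ j ∈ S ∩ T, Γ j := by
  ext v
  simp only [Submodule.mem_inf, mem_biSup_iff h]
  constructor
  · rintro ⟨hS, hT⟩ j hj
    rcases not_and_or.mp hj with hj | hj
    exacts [hS j hj, hT j hj]
  · intro hST
    exact ⟨fun j hj => hST j fun hm => hj hm.1, fun j hj => hST j fun hm => hj hm.2⟩


lemma lo_refl {le : I → I → Prop} (hle : IsLinearOrder I le) (a : I) : le a a :=
  hle.toIsPartialOrder.toIsPreorder.toRefl.refl a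

lemma lo_trans {le : I → I → Prop} (hle : IsLinearOrder I le) {a b c : I}
    (hab : le a b) (hbc : le b c) : le a c :=
  hle.toIsPartialOrder.toIsPreorder.toIsTrans.trans a b c hab hbc

lemma lo_antisymm {le : I → I → Prop} (hle : IsLinearOrder I le) {a b : I}
    (hab : le a b) (hba : le b a) : a = b :=
  hle.toIsPartialOrder.toAntisymm.antisymm a b hab hba

lemma lt_subset_lt {le : I → I → Prop} (hle : IsLinearOrder I le) {i j : I} (hij : le j i)
    {k : I} (hk : le k j ∧ k ≠ j) : le k i ∧ k ≠ i := by
  refine ⟨lo_trans hle hk.1 hij, ?_⟩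
  rintro rfl
  exact hk.2 (lo_antisymm hle hk.1 hij)

lemma filtLT_mono {le : I → I → Prop} (hle : IsLinearOrder I le) (F : I → Submodule ℂ V)
    {i j : I} (hij : le j i) : filtLT le F j ≤ filtLT le F i :=
  iSup₂_le fun k hk => le_iSup₂_of_le k (lt_subset_lt hle hij hk) le_rfl

lemma filtLT_le {le : I → I → Prop} (F : I → Submodule ℂ V) (hF : IsFiltrationI le F) (i : I) :
    filtLT le F i ≤ F i :=
  iSup₂_le fun j hj => hF j i hj.1

section Splits

variable {le : I → I → Prop} {F Γ : I → Submodule ℂ V}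

lemma grading_le_F (hle : IsLinearOrder I le) (hsp : ∀ i, F i = assocFilt Γ le i) (i : I) :
    Γ i ≤ F i := by
  rw [hsp i]
  exact le_iSup₂_of_le i (lo_refl hle i) le_rfl

lemma filtLT_split (hle : IsLinearOrder I le) (hsp : ∀ i, F i = assocFilt Γ le i) (i : I) :
    filtLT le F i = ⨆ j ∈ {j | le j i ∧ j ≠ i}, Γ j := by
  apply le_antisymm
  · refine iSup₂_le fun j hj => ?_
    rw [hsp j]
    refine iSup₂_le fun k hk => le_iSup₂_of_le k ⟨lo_trans hle hk hj.1, ?_⟩ le_rfl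
    rintro rfl
    exact hj.2 (lo_antisymm hle hj.1 hk)
  · refine iSup₂_le fun k hk => ?_
    exact le_iSup₂_of_le k hk (grading_le_F hle hsp k)

lemma F_eq_sup (hle : IsLinearOrder I le) (hsp : ∀ i, F i = assocFilt Γ le i) (i : I) :
    F i = Γ i ⊔ filtLT le F i := by
  rw [filtLT_split hle hsp i, hsp i]
  apply le_antisymm
  · refine iSup₂_le fun j hj => ?_
    by_cases hji : j = i
    · subst hji; exact le_sup_of_le_left le_rfl
    · exact le_sup_of_le_right (le_iSup₂_of_le j ⟨hj, hji⟩ le_rfl)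
  · refine sup_le (le_iSup₂_of_le i (lo_refl hle i) le_rfl)
      (iSup₂_le fun j hj => le_iSup₂_of_le j hj.1 le_rfl)

lemma disj_filtLT (hle : IsLinearOrder I le) (hgr : IsGrading Γ)
    (hsp : ∀ i, F i = assocFilt Γ le i) (i : I) : Disjoint (Γ i) (filtLT le F i) := by
  rw [filtLT_split hle hsp i]
  exact hgr.1.disjoint_biSup (fun hmem => hmem.2 rfl)

lemma finrank_grading (hle : IsLinearOrder I le) (hgr : IsGrading Γ)
    (hsp : ∀ i, F i = assocFilt Γ le i) (i : I) :
    Module.finrank ℂ (Γ i) + Module.finrank ℂ (filtLT le F i) = Module.finrank ℂ (F i) := by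
  have h1 := Submodule.finrank_sup_add_finrank_inf_eq (Γ i) (filtLT le F i)
  rw [(disj_filtLT hle hgr hsp i).eq_bot, finrank_bot, add_zero] at h1
  rw [F_eq_sup hle hsp i, h1]

/-- A member of `Ugrp` preserves each `F i`. -/
lemma map_F_eq {g : V ≃ₗ[ℂ] V} (hF : IsFiltrationI le F) (hg : g ∈ Ugrp le F) (i : I) :
    (F i).map (g : V →ₗ[ℂ] V) = F i := by
  have hmaple : (F i).map (g : V →ₗ[ℂ] V) ≤ F i := by
    rw [Submodule.map_le_iff_le_comap]
    intro v hv
    have h1 : g v - v ∈ F i := filtLT_le F hF i (hg i v hv)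
    have : g v = (g v - v) + v := (sub_add_cancel _ _).symm
    simpa only [Submodule.mem_comap] using this ▸ add_mem h1 hv
  exact Submodule.eq_of_le_of_finrank_le hmaple (LinearEquiv.finrank_map_eq g (F i)).ge

/-- `g ∈ Ugrp le F` maps a splitting of `F` to a splitting of `F`. -/
lemma splits_map (hle : IsLinearOrder I le) (hF : IsFiltrationI le F)
    (hsp : SplitsF le F Γ) {g : V ≃ₗ[ℂ] V} (hg : g ∈ Ugrp le F) :
    SplitsF le F (fun j => (Γ j).map (g : V →ₗ[ℂ] V)) := by
  obtain ⟨⟨hind, hsup⟩, hs⟩ := hsp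
  refine ⟨⟨?_, ?_⟩, ?_⟩
  · have h1 := hind.map_orderIso (Submodule.orderIsoMapComap (g : V ≃ₗ[ℂ] V))
    convert h1 using 1
    funext j
    exact (Submodule.map_equiv_eq_comap_symm _ _).trans (Submodule.orderIsoMapComap_apply' _ _).symm
  · show (⨆ i, (Γ i).map (g : V →ₗ[ℂ] V)) = ⊤
    rw [← Submodule.map_iSup, hsup, Submodule.map_top]
    exact LinearMap.range_eq_top.mpr g.surjective
  · intro i
    show F i = ⨆ j ∈ {j | le j i}, (Γ j).map (g : V →ₗ[ℂ] V)
    conv_lhs => rw [← map_F_eq hF hg i, hs i]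
    show Submodule.map _ (⨆ j ∈ {j | le j i}, Γ j) = _
    simp only [Submodule.map_iSup]

end Splits

end DSTaux
end Aux

/-- given a grading `Γ₀` splitting both filtrations `F₁` and `F₂`, the map
`g ↦ (i ↦ g(Γ₀(i)))` is a bijection from `U(F₁) ∩ U(F₂)` onto the set of gradings splitting
both `F₁` and `F₂`. -/
theorem double_splittings_torsor
    (le₁ le₂ : I → I → Prop) (hle₁ : IsLinearOrder I le₁) (hle₂ : IsLinearOrder I le₂)
    (F₁ F₂ Γ₀ : I → Submodule ℂ V)
    (hF₁ : IsFiltrationI le₁ F₁) (hF₂ : IsFiltrationI le₂ F₂)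
    (hΓ₀F₁ : SplitsF le₁ F₁ Γ₀) (hΓ₀F₂ : SplitsF le₂ F₂ Γ₀) :
    Set.BijOn (fun (g : V ≃ₗ[ℂ] V) => fun i => (Γ₀ i).map (g : V →ₗ[ℂ] V))
      (Ugrp le₁ F₁ ∩ Ugrp le₂ F₂)
      {Γ | SplitsF le₁ F₁ Γ ∧ SplitsF le₂ F₂ Γ} := by
  classical
  open DSTaux in
  obtain ⟨⟨hind₀, hsup₀⟩, hs₀₁⟩ := hΓ₀F₁
  obtain ⟨-, hs₀₂⟩ := hΓ₀F₂
  have hInt₀ : DirectSum.IsInternal Γ₀ :=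
    DirectSum.isInternal_submodule_of_iSupIndep_of_iSup_eq_top hind₀ hsup₀
  refine ⟨?_, ?_, ?_⟩
  · -- MapsTo
    rintro g ⟨hg₁, hg₂⟩
    exact ⟨DSTaux.splits_map hle₁ hF₁ ⟨⟨hind₀, hsup₀⟩, hs₀₁⟩ hg₁,
      DSTaux.splits_map hle₂ hF₂ ⟨⟨hind₀, hsup₀⟩, hs₀₂⟩ hg₂⟩
  · -- InjOn
    intro g hg h hh heq
    have hsplit := DSTaux.splits_map hle₁ hF₁ ⟨⟨hind₀, hsup₀⟩, hs₀₁⟩ hg.1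
    have key : ∀ i, Γ₀ i ≤ LinearMap.eqLocus (g : V →ₗ[ℂ] V) (h : V →ₗ[ℂ] V) := by
      intro i v hv
      rw [LinearMap.mem_eqLocus]
      have h1 : g v - v ∈ filtLT le₁ F₁ i :=
        hg.1 i v (DSTaux.grading_le_F hle₁ hs₀₁ i hv)
      have h2 : h v - v ∈ filtLT le₁ F₁ i :=
        hh.1 i v (DSTaux.grading_le_F hle₁ hs₀₁ i hv)
      have h3 : g v - h v ∈ filtLT le₁ F₁ i := by
        have := sub_mem h1 h2
        simpa using this
      have h4 : g v ∈ (Γ₀ i).map (g : V →ₗ[ℂ] V) := Submodule.mem_map_of_mem hv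
      have h5 : h v ∈ (Γ₀ i).map (g : V →ₗ[ℂ] V) := by
        have : (Γ₀ i).map (g : V →ₗ[ℂ] V) = (Γ₀ i).map (h : V →ₗ[ℂ] V) := congrFun heq i
        rw [this]
        exact Submodule.mem_map_of_mem hv
      have h6 : g v - h v ∈ (Γ₀ i).map (g : V →ₗ[ℂ] V) := sub_mem h4 h5
      have hdisj := DSTaux.disj_filtLT hle₁ hsplit.1 hsplit.2 i
      have h0 : g v - h v = 0 :=
        Submodule.disjoint_def.mp hdisj _ h6 h3
      exact sub_eq_zero.mp h0
    refine LinearEquiv.ext fun v => ?_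
    have hv : v ∈ (⊤ : Submodule ℂ V) := trivial
    rw [← hsup₀] at hv
    exact LinearMap.mem_eqLocus.mp ((iSup_le key) hv)
  · -- SurjOn
    intro Γ hΓmem
    obtain ⟨⟨⟨hindΓ, hsupΓ⟩, hsΓ₁⟩, ⟨-, hsΓ₂⟩⟩ := hΓmem
    have hIntΓ : DirectSum.IsInternal Γ :=
      DirectSum.isInternal_submodule_of_iSupIndep_of_iSup_eq_top hindΓ hsupΓ
    set p0 := DSTaux.gproj hInt₀ with hp0
    set pG := DSTaux.gproj hIntΓ with hpG
    set glin : V →ₗ[ℂ] V := ∑ i, (pG i) ∘ₗ (p0 i) with hglin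
    -- (a) on Γ₀ j, glin acts as pG j
    have key1 : ∀ j, ∀ v ∈ Γ₀ j, glin v = pG j v := by
      intro j v hv
      rw [hglin, LinearMap.sum_apply]
      rw [Finset.sum_eq_single j ?h0 (fun hj => absurd (Finset.mem_univ j) hj)]
      · rw [LinearMap.comp_apply, DSTaux.gproj_of_mem hInt₀ hv]
      case h0 =>
        intro i _ hij
        rw [LinearMap.comp_apply, DSTaux.gproj_of_mem_ne hInt₀ (Ne.symm hij) hv, map_zero]
    -- (b) the difference lands in both filtLT's
    have key2 : ∀ j, ∀ v ∈ Γ₀ j,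
        v - pG j v ∈ filtLT le₁ F₁ j ⊓ filtLT le₂ F₂ j := by
      intro j v hv
      have hvF₁ : v ∈ F₁ j := DSTaux.grading_le_F hle₁ hs₀₁ j hv
      have hvF₂ : v ∈ F₂ j := DSTaux.grading_le_F hle₂ hs₀₂ j hv
      have hvS : v ∈ ⨆ k ∈ {k | le₁ k j}, Γ k := by
        have := (hsΓ₁ j) ▸ hvF₁; exact this
      have hvT : v ∈ ⨆ k ∈ {k | le₂ k j}, Γ k := by
        have := (hsΓ₂ j) ▸ hvF₂; exact this
      have hvST : v ∈ ⨆ k ∈ ({k | le₁ k j} ∩ {k | le₂ k j}), Γ k := by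
        rw [← DSTaux.biSup_inf_biSup hIntΓ]
        exact ⟨hvS, hvT⟩
      have hcomp : ∀ k ∉ ({k | le₁ k j} ∩ {k | le₂ k j}) \ {j},
          pG k (v - pG j v) = 0 := by
        intro k hk
        rw [map_sub]
        by_cases hkj : k = j
        · subst hkj
          rw [DSTaux.gproj_of_mem hIntΓ (DSTaux.gproj_mem hIntΓ k v), sub_self]
        · rw [DSTaux.gproj_of_mem_ne hIntΓ (Ne.symm hkj) (DSTaux.gproj_mem hIntΓ j v)]
          have hknot : k ∉ ({k | le₁ k j} ∩ {k | le₂ k j}) := by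
            intro hmem
            exact hk ⟨hmem, hkj⟩
          rw [(DSTaux.mem_biSup_iff hIntΓ).mp hvST k hknot, sub_zero]
      have hmem2 : v - pG j v ∈ ⨆ k ∈ ({k | le₁ k j} ∩ {k | le₂ k j}) \ {j}, Γ k :=
        (DSTaux.mem_biSup_iff hIntΓ).mpr hcomp
      refine Submodule.mem_inf.mpr ⟨?_, ?_⟩
      · refine (?_ : (_ : Submodule ℂ V) ≤ _) hmem2
        rw [DSTaux.filtLT_split hle₁ hsΓ₁ j]
        exact biSup_mono fun k hk => ⟨hk.1.1, hk.2⟩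
      · refine (?_ : (_ : Submodule ℂ V) ≤ _) hmem2
        rw [DSTaux.filtLT_split hle₂ hsΓ₂ j]
        exact biSup_mono fun k hk => ⟨hk.1.2, hk.2⟩
    -- (c) pG j is injective on Γ₀ j
    have hker : ∀ j, ∀ w ∈ Γ₀ j, pG j w = 0 → w = 0 := by
      intro j w hw h0
      have h1 : w - pG j w ∈ filtLT le₁ F₁ j ⊓ filtLT le₂ F₂ j := key2 j w hw
      rw [h0, sub_zero] at h1
      have hdisj := DSTaux.disj_filtLT hle₁ ⟨hind₀, hsup₀⟩ hs₀₁ j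
      exact Submodule.disjoint_def.mp hdisj w hw (Submodule.mem_inf.mp h1).1
    -- (d) glin is bijective
    have hinj : Function.Injective glin := by
      rw [← LinearMap.ker_eq_bot, eq_bot_iff]
      intro v hv
      rw [LinearMap.mem_ker] at hv
      have hc : ∀ j, pG j (p0 j v) = 0 := by
        intro j
        have h1 : pG j (glin v) = 0 := by rw [hv, map_zero]
        rw [hglin, LinearMap.sum_apply, map_sum] at h1
        rw [Finset.sum_eq_single j ?h0 (fun hj => absurd (Finset.mem_univ j) hj)] at h1
        · rwa [LinearMap.comp_apply,
            DSTaux.gproj_of_mem hIntΓ (DSTaux.gproj_mem hIntΓ j (p0 j v))] at h1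
        case h0 =>
          intro i _ hij
          rw [LinearMap.comp_apply]
          exact DSTaux.gproj_of_mem_ne hIntΓ hij
            (DSTaux.gproj_mem hIntΓ i (p0 i v))
      have hz : ∀ j, p0 j v = 0 :=
        fun j => hker j (p0 j v) (DSTaux.gproj_mem hInt₀ j v) (hc j)
      have hsum := DSTaux.sum_gproj hInt₀ v
      rw [Submodule.mem_bot, ← hsum]
      exact Finset.sum_eq_zero fun j _ => hz j
    have hbij : Function.Bijective glin := ⟨hinj, LinearMap.injective_iff_surjective.mp hinj⟩
    set g : V ≃ₗ[ℂ] V := LinearEquiv.ofBijective glin hbij with hgdef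
    have hgapp : ∀ v, g v = glin v := fun v => rfl
    -- (e) g maps Γ₀ i onto Γ i
    have gmaple : ∀ i, (Γ₀ i).map (g : V →ₗ[ℂ] V) ≤ Γ i := by
      intro i
      rw [Submodule.map_le_iff_le_comap]
      intro v hv
      rw [Submodule.mem_comap]
      show g v ∈ Γ i
      rw [hgapp, key1 i v hv]
      exact DSTaux.gproj_mem hIntΓ i v
    have frk : ∀ i, Module.finrank ℂ (Γ₀ i) = Module.finrank ℂ (Γ i) := by
      intro i
      have e1 := DSTaux.finrank_grading hle₁ ⟨hind₀, hsup₀⟩ hs₀₁ i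
      have e2 := DSTaux.finrank_grading hle₁ ⟨hindΓ, hsupΓ⟩ hsΓ₁ i
      omega
    have gmap : ∀ i, (Γ₀ i).map (g : V →ₗ[ℂ] V) = Γ i := by
      intro i
      refine Submodule.eq_of_le_of_finrank_le (gmaple i) ?_
      rw [LinearEquiv.finrank_map_eq g (Γ₀ i), frk i]
    -- (f) g lies in both unipotent groups
    have hUmem : ∀ (le : I → I → Prop), IsLinearOrder I le → ∀ (F : I → Submodule ℂ V),
        IsFiltrationI le F → (∀ i, F i = assocFilt Γ₀ le i) →
        (∀ j, ∀ v ∈ Γ₀ j, v - pG j v ∈ filtLT le F j) → g ∈ Ugrp le F := by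
      intro le hle F hF hs hd
      intro i v hv
      have hclaim : F i ≤ Submodule.comap (glin - LinearMap.id) (filtLT le F i) := by
        rw [hs i]
        refine iSup₂_le fun j hj => ?_
        intro w hw
        rw [Submodule.mem_comap, LinearMap.sub_apply, LinearMap.id_apply, key1 j w hw]
        have h1 : w - pG j w ∈ filtLT le F j := hd j w hw
        have h2 : pG j w - w = -(w - pG j w) := by abel
        rw [h2]
        exact neg_mem (DSTaux.filtLT_mono hle F hj h1)
      have := hclaim hv
      rw [Submodule.mem_comap, LinearMap.sub_apply, LinearMap.id_apply] at this
      rw [hgapp]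
      exact this
    refine ⟨g, ⟨?_, ?_⟩, funext gmap⟩
    · exact hUmem le₁ hle₁ F₁ hF₁ hs₀₁
        (fun j v hv => (Submodule.mem_inf.mp (key2 j v hv)).1)
    · exact hUmem le₂ hle₂ F₂ hF₂ hs₀₂
        (fun j v hv => (Submodule.mem_inf.mp (key2 j v hv)).2)
end

section
/- Let V be a finite-dimensional complex vector space, I a finite set with a total order ≤, F an I-filtration of V, and Γ₁, Γ₂ two I-gradings of V both splitting F. Let g ∈ GL(V) satisfy g(Γ₁(i)) = Γ₂(i) for all i and (g − 1)(F(i)) ⊆ F(<i) for all i. If v ∈ Γ₁(i) ∩ Γ₂(i) for some i ∈ I, then g(v) = v. -/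
open Submodule

variable {V : Type} [AddCommGroup V] [Module ℂ V] [FiniteDimensional ℂ V]
variable {I : Type} [Fintype I]

/-- if `g` is the wild monodromy relating two gradings `Γ₁, Γ₂` splitting `F`,
then any vector lying in `Γ₁(i) ∩ Γ₂(i)` for some `i` is fixed by `g`. -/
theorem wild_monodromy_fixes_common_vectors
    (le : I → I → Prop) (hle : IsLinearOrder I le)
    (F Γ₁ Γ₂ : I → Submodule ℂ V) (hF : IsIFiltration le F)
    (hΓ₁ : SplitsF le F Γ₁) (hΓ₂ : SplitsF le F Γ₂)
    (g : V ≃ₗ[ℂ] V)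
    (hgΓ : ∀ i, (Γ₁ i).map (g : V →ₗ[ℂ] V) = Γ₂ i)
    (hgU : g ∈ Ugrp le F)
    (i : I) (v : V) (hv₁ : v ∈ Γ₁ i) (hv₂ : v ∈ Γ₂ i) :
    g v = v := by
  have hrefl : le i i := (hle.total i i).elim id id
  have hvF : v ∈ F i := by
    rw [hΓ₁.2 i]
    exact le_biSup Γ₁ (show i ∈ {j | le j i} from hrefl) hv₁
  have hgv : g v ∈ Γ₂ i := by
    rw [← hgΓ i]; exact Submodule.mem_map_of_mem hv₁
  have hd : g v - v ∈ filtLT le F i := hgU i v hvF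
  have hd2 : g v - v ∈ Γ₂ i := sub_mem hgv hv₂
  -- filtLT le F i ≤ ⨆ j ≠ i, Γ₂ j
  have hlt : filtLT le F i ≤ ⨆ j, ⨆ _ : j ≠ i, Γ₂ j := by
    apply iSup₂_le
    intro j hj
    rw [hΓ₂.2 j]
    apply iSup₂_le
    intro k hk
    have hki : k ≠ i := by
      rintro rfl
      exact hj.2 (hle.toIsPartialOrder.toAntisymm.antisymm _ _ hj.1 hk)
    exact le_iSup₂ (f := fun j (_ : j ≠ i) => Γ₂ j) k hki
  have hdisj : Disjoint (Γ₂ i) (⨆ j, ⨆ _ : j ≠ i, Γ₂ j) := hΓ₂.1.1 i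
  have : g v - v = 0 := by
    have := hdisj.le_bot ⟨hd2, hlt hd⟩
    simpa using this
  have := sub_eq_zero.mp this
  simpa using this
end

section
/- Let A be an n × n complex matrix such that A − 1 is nilpotent (A is unipotent). Then there exists a unique n × n complex matrix X such that X is nilpotent and Matrix.exp X = A. (Every unipotent matrix has a unique nilpotent logarithm.) -/
open NormedSpace -- for the exponential `exp ℂ` of matrices
open Polynomial Finset

set_option linter.unnecessarySimpa false
set_option linter.deprecated false



/-- A real polynomial all of whose values on `(0, δ)` are `O(t^m)` is divisible by `X^m`. -/
lemma X_pow_dvd_of_small (m : ℕ) (g : Polynomial ℝ) (c δ : ℝ) (hδ : 0 < δ)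
    (h : ∀ t : ℝ, t ∈ Set.Ioo 0 δ → |g.eval t| ≤ c * t ^ m) :
    (X : Polynomial ℝ) ^ m ∣ g := by
  induction m generalizing g with
  | zero => simpa using one_dvd g
  | succ m ih =>
    have h0 : g.eval 0 = 0 := by
      have hmem : ∀ᶠ t in nhdsWithin (0:ℝ) (Set.Ioi 0), t ∈ Set.Ioo 0 δ := by
        filter_upwards [Ioo_mem_nhdsGT_of_mem (by simp [hδ] : (0:ℝ) ∈ Set.Ico 0 δ)] with t ht
        exact ht
      have h1 : Filter.Tendsto (fun t : ℝ => g.eval t) (nhdsWithin 0 (Set.Ioi 0))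
          (nhds (g.eval 0)) :=
        (g.continuous.tendsto 0).mono_left nhdsWithin_le_nhds
      have h2 : Filter.Tendsto (fun t : ℝ => g.eval t) (nhdsWithin 0 (Set.Ioi 0)) (nhds 0) := by
        have hb : Filter.Tendsto (fun t : ℝ => c * t ^ (m+1)) (nhdsWithin 0 (Set.Ioi 0))
            (nhds 0) := by
          have : Filter.Tendsto (fun t : ℝ => c * t ^ (m+1)) (nhds 0) (nhds (c * 0 ^ (m+1))) :=
            (continuous_const.mul (continuous_pow _)).tendsto 0
          simpa using this.mono_left nhdsWithin_le_nhds
        refine squeeze_zero_norm' ?_ hb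
        filter_upwards [hmem] with t ht using by simpa using h t ht
      exact tendsto_nhds_unique h1 h2
    have hX : (X : Polynomial ℝ) ∣ g := by
      rw [X_dvd_iff]
      simpa [coeff_zero_eq_eval_zero] using h0
    obtain ⟨q, rfl⟩ := hX
    have hq : (X : Polynomial ℝ) ^ m ∣ q := by
      apply ih q
      intro t ht
      have ht0 : 0 < t := ht.1
      have := h t ht
      rw [eval_mul, eval_X, abs_mul, abs_of_pos ht0, pow_succ'] at this
      calc |q.eval t| = t * |q.eval t| / t := by field_simp
        _ ≤ c * (t * t^m) / t := by
            exact div_le_div_of_nonneg_right this ht0.le |>.trans_eq rfl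
        _ = c * t ^ m := by field_simp
    obtain ⟨r, rfl⟩ := hq
    exact ⟨r, by ring⟩


noncomputable def Efun (m : ℕ) (y : ℝ) : ℝ := ∑ j ∈ range m, y ^ j / j.factorial
noncomputable def Lfun (m : ℕ) (t : ℝ) : ℝ := ∑ i ∈ range m, (-1:ℝ)^i * t^(i+1) / (i+1)

lemma abs_pow_sub_pow (a b : ℝ) (ha : |a| ≤ 1) (hb : |b| ≤ 1) (j : ℕ) :
    |a ^ j - b ^ j| ≤ j * |a - b| := by
  induction j with
  | zero => simp
  | succ j ih =>
    have : a ^ (j+1) - b ^ (j+1) = a * (a ^ j - b ^ j) + (a - b) * b ^ j := by ring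
    rw [this]
    calc |a * (a ^ j - b ^ j) + (a - b) * b ^ j|
        ≤ |a * (a ^ j - b ^ j)| + |(a - b) * b ^ j| := abs_add_le _ _
      _ = |a| * |a ^ j - b ^ j| + |a - b| * |b| ^ j := by rw [abs_mul, abs_mul, abs_pow]
      _ ≤ 1 * (j * |a - b|) + |a - b| * 1 := by
          have h1 : |a| * |a ^ j - b ^ j| ≤ 1 * (j * |a - b|) :=
            mul_le_mul ha ih (abs_nonneg _) one_pos.le
          have h2 : |a - b| * |b| ^ j ≤ |a - b| * 1 :=
            mul_le_mul_of_nonneg_left (pow_le_one₀ (abs_nonneg _) hb) (abs_nonneg _)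
          linarith
      _ = (j + 1 : ℕ) * |a - b| := by push_cast; ring




lemma Efun_lip (m : ℕ) (a b : ℝ) (ha : |a| ≤ 1) (hb : |b| ≤ 1) :
    |Efun m a - Efun m b| ≤ m * |a - b| := by
  rw [Efun, Efun, ← Finset.sum_sub_distrib]
  refine (Finset.abs_sum_le_sum_abs _ _).trans ?_
  have key : ∀ j ∈ range m, |a ^ j / j.factorial - b ^ j / j.factorial| ≤ |a - b| := by
    intro j _
    rw [div_sub_div_same, abs_div, abs_of_pos (by positivity : (0:ℝ) < j.factorial)]
    rw [div_le_iff₀ (by positivity : (0:ℝ) < j.factorial)]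
    calc |a ^ j - b ^ j| ≤ j * |a - b| := abs_pow_sub_pow a b ha hb j
      _ ≤ j.factorial * |a - b| := by
          have := Nat.self_le_factorial j
          have : (j:ℝ) ≤ j.factorial := by exact_mod_cast this
          nlinarith [abs_nonneg (a - b)]
      _ = |a - b| * j.factorial := by ring
  calc ∑ j ∈ range m, |a ^ j / j.factorial - b ^ j / j.factorial|
      ≤ ∑ _j ∈ range m, |a - b| := Finset.sum_le_sum key
    _ = m * |a - b| := by simp [mul_comm]

lemma Lfun_lip (m : ℕ) (a b : ℝ) (ha : |a| ≤ 1) (hb : |b| ≤ 1) :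
    |Lfun m a - Lfun m b| ≤ m * |a - b| := by
  rw [Lfun, Lfun, ← Finset.sum_sub_distrib]
  refine (Finset.abs_sum_le_sum_abs _ _).trans ?_
  have key : ∀ i ∈ range m,
      |(-1:ℝ)^i * a^(i+1) / (i+1) - (-1:ℝ)^i * b^(i+1) / (i+1)| ≤ |a - b| := by
    intro i _
    have h1 : (-1:ℝ)^i * a^(i+1) / (i+1) - (-1:ℝ)^i * b^(i+1) / (i+1)
        = (-1:ℝ)^i * (a^(i+1) - b^(i+1)) / (i+1) := by ring
    rw [h1, abs_div, abs_mul, abs_pow, abs_neg, abs_one, one_pow, one_mul,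
      abs_of_pos (by positivity : (0:ℝ) < (i:ℝ)+1)]
    rw [div_le_iff₀ (by positivity : (0:ℝ) < (i:ℝ)+1)]
    calc |a^(i+1) - b^(i+1)| ≤ (i+1) * |a - b| := by
          have := abs_pow_sub_pow a b ha hb (i+1); push_cast at this ⊢; linarith
      _ = |a - b| * ((i:ℝ)+1) := by ring
  calc ∑ i ∈ range m, |(-1:ℝ)^i * a^(i+1) / (i+1) - (-1:ℝ)^i * b^(i+1) / (i+1)|
      ≤ ∑ _i ∈ range m, |a - b| := Finset.sum_le_sum key
    _ = m * |a - b| := by simp [mul_comm]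

lemma expErr (m : ℕ) (hm : 1 ≤ m) (y : ℝ) (hy : |y| ≤ 1) :
    |Real.exp y - Efun m y| ≤ 2 * |y| ^ m := by
  have h := Real.exp_bound hy (by omega : 0 < m)
  rw [Efun]
  refine h.trans ?_
  rw [mul_comm (2:ℝ)]
  apply mul_le_mul_of_nonneg_left ?_ (by positivity)
  have hf : (1:ℝ) ≤ m.factorial := by exact_mod_cast Nat.one_le_iff_ne_zero.mpr m.factorial_ne_zero
  have hm' : (1:ℝ) ≤ m := by exact_mod_cast hm
  rw [div_le_iff₀ (by positivity)]
  push_cast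
  nlinarith

lemma logErr (m : ℕ) (u : ℝ) (h0 : 0 ≤ u) (h1 : u < 1) :
    |Lfun m u - Real.log (1+u)| ≤ u^(m+1)/(1-u) := by
  have habs : |(-u)| < 1 := by rwa [abs_neg, abs_of_nonneg h0]
  have h := Real.abs_log_sub_add_sum_range_le habs m
  have hsum : ∑ i ∈ range m, (-u)^(i+1)/(i+1) = -Lfun m u := by
    rw [Lfun, ← Finset.sum_neg_distrib]
    refine Finset.sum_congr rfl fun i _ => ?_
    rw [neg_pow, pow_succ]
    ring
  rw [hsum] at h
  have : 1 - (-u) = 1 + u := by ring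
  rw [this, abs_neg, abs_of_nonneg h0] at h
  calc |Lfun m u - Real.log (1+u)| = |(-Lfun m u) + Real.log (1+u)| := by
        rw [← abs_neg]; ring_nf
    _ ≤ u^(m+1)/(1-u) := h




lemma Est1 (m : ℕ) (hm : 1 ≤ m) (t : ℝ) (ht : t ∈ Set.Ioo (0:ℝ) (1/4)) :
    |Efun m (Lfun m t) - (1 + t)| ≤ (m + 4) * t ^ m := by
  obtain ⟨ht0, ht4⟩ := ht
  have htm : t ^ m ≤ t := pow_le_of_le_one ht0.le (by linarith) (by omega)
  have htpos : (0:ℝ) < t ^ m := by positivity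
  set b := Real.log (1 + t) with hbdef
  have hb0 : 0 < b := Real.log_pos (by linarith)
  have hbt : b ≤ t := by
    have := Real.log_le_sub_one_of_pos (show (0:ℝ) < 1 + t by linarith)
    simpa using this
  have hb1 : |b| ≤ 1 := by rw [abs_of_pos hb0]; linarith
  have hab : |Lfun m t - b| ≤ t ^ m := by
    have h := logErr m t ht0.le (by linarith)
    refine h.trans ?_
    rw [div_le_iff₀ (by linarith)]
    have : t ^ (m+1) = t ^ m * t := by ring
    rw [this]
    nlinarith
  have ha1 : |Lfun m t| ≤ 1 := by
    have : |Lfun m t| ≤ |Lfun m t - b| + |b| := by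
      calc |Lfun m t| = |(Lfun m t - b) + b| := by ring_nf
        _ ≤ |Lfun m t - b| + |b| := abs_add_le _ _
    rw [abs_of_pos hb0] at this
    linarith
  have s1 : |Efun m (Lfun m t) - Efun m b| ≤ m * t ^ m := by
    have := Efun_lip m (Lfun m t) b ha1 hb1
    have h2 : (m:ℝ) * |Lfun m t - b| ≤ m * t ^ m := by
      apply mul_le_mul_of_nonneg_left hab (by positivity)
    linarith
  have s2 : |Efun m b - (1 + t)| ≤ 3 * t ^ m := by
    have h := expErr m hm b hb1
    rw [Real.exp_log (by linarith : (0:ℝ) < 1 + t)] at h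
    have hbm : |b| ^ m ≤ t ^ m := pow_le_pow_left₀ (abs_nonneg _) (by rw [abs_of_pos hb0]; linarith) m
    rw [abs_sub_comm] at h
    nlinarith
  calc |Efun m (Lfun m t) - (1 + t)|
      ≤ |Efun m (Lfun m t) - Efun m b| + |Efun m b - (1 + t)| := abs_sub_le _ _ _
    _ ≤ m * t ^ m + 3 * t ^ m := by linarith
    _ ≤ (m + 4) * t ^ m := by nlinarith

lemma Est2 (m : ℕ) (hm : 1 ≤ m) (t : ℝ) (ht : t ∈ Set.Ioo (0:ℝ) (1/4)) :
    |Lfun m (Efun m t - 1) - t| ≤ (2 * m + 2^(m+2) + 2) * t ^ m := by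
  obtain ⟨ht0, ht4⟩ := ht
  have htm : t ^ m ≤ t := pow_le_of_le_one ht0.le (by linarith) (by omega)
  have ht1 : |t| ≤ 1 := by rw [abs_of_pos ht0]; linarith
  set u := Real.exp t - 1 with hudef
  have hu0 : 0 ≤ u := by
    have := Real.one_le_exp ht0.le
    simp [hudef]; linarith
  have hu2t : u ≤ 2 * t := by
    have h := expErr 1 le_rfl t ht1
    have h1 : Efun 1 t = 1 := by simp [Efun]
    rw [h1, abs_of_pos ht0] at h
    have := abs_sub_le_iff.mp h
    simp [hudef]; linarith [this.1]
  have hu1 : u < 1 := by linarith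
  have hvu : |(Efun m t - 1) - u| ≤ 2 * t ^ m := by
    have h := expErr m hm t ht1
    rw [abs_of_pos ht0] at h
    rw [abs_sub_comm] at h
    have : (Efun m t - 1) - u = Efun m t - Real.exp t := by rw [hudef]; ring
    rw [this]; exact h
  have hu1' : |u| ≤ 1 := by rw [abs_of_nonneg hu0]; linarith
  have hv1 : |Efun m t - 1| ≤ 1 := by
    have : |Efun m t - 1| ≤ |(Efun m t - 1) - u| + |u| := by
      calc |Efun m t - 1| = |((Efun m t - 1) - u) + u| := by ring_nf
        _ ≤ |(Efun m t - 1) - u| + |u| := abs_add_le _ _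
    rw [abs_of_nonneg hu0] at this
    linarith
  have s1 : |Lfun m (Efun m t - 1) - Lfun m u| ≤ 2 * m * t ^ m := by
    have := Lfun_lip m (Efun m t - 1) u hv1 hu1'
    have h2 : (m:ℝ) * |(Efun m t - 1) - u| ≤ m * (2 * t ^ m) :=
      mul_le_mul_of_nonneg_left hvu (by positivity)
    calc |Lfun m (Efun m t - 1) - Lfun m u| ≤ m * |(Efun m t - 1) - u| := this
      _ ≤ m * (2 * t ^ m) := h2
      _ = 2 * m * t ^ m := by ring
  have s2 : |Lfun m u - t| ≤ 2^(m+2) * t ^ m := by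
    have h := logErr m u hu0 hu1
    have hlog : Real.log (1 + u) = t := by
      have : (1:ℝ) + u = Real.exp t := by simp [hudef]
      rw [this, Real.log_exp]
    rw [hlog] at h
    refine h.trans ?_
    have hnum : u^(m+1) ≤ (2*t)^(m+1) := pow_le_pow_left₀ hu0 hu2t _
    have hden : (1:ℝ)/2 ≤ 1 - u := by linarith
    have h3 : u^(m+1)/(1-u) ≤ (2*t)^(m+1)/(1/2) := by
      apply div_le_div₀ (by positivity) hnum (by norm_num) hden
    refine h3.trans ?_
    rw [mul_pow]
    have : (2:ℝ)^(m+1) * t^(m+1) / (1/2) = 2^(m+2) * t^(m+1) := by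
      rw [pow_succ (2:ℝ) (m+1)]; ring
    rw [this]
    have ht1' : t^(m+1) ≤ t^m := by
      rw [pow_succ]
      nlinarith [pow_pos ht0 m]
    nlinarith [pow_pos (show (0:ℝ) < 2 by norm_num) (m+2)]
  calc |Lfun m (Efun m t - 1) - t|
      ≤ |Lfun m (Efun m t - 1) - Lfun m u| + |Lfun m u - t| := abs_sub_le _ _ _
    _ ≤ 2*m * t ^ m + 2^(m+2) * t ^ m := by linarith
    _ ≤ (2*m + 2^(m+2) + 2) * t ^ m := by nlinarith [pow_pos ht0 m]


noncomputable def Ep (m : ℕ) : Polynomial ℝ := ∑ j ∈ range m, C ((j.factorial:ℝ))⁻¹ * X^j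
noncomputable def Lp (m : ℕ) : Polynomial ℝ := ∑ i ∈ range m, C ((-1:ℝ)^i / (i+1)) * X^(i+1)

lemma Ep_eval (m : ℕ) (y : ℝ) : (Ep m).eval y = Efun m y := by
  rw [Ep, Efun, eval_finset_sum]
  refine Finset.sum_congr rfl fun j _ => ?_
  rw [eval_mul, eval_C, eval_pow, eval_X, div_eq_mul_inv, mul_comm]

lemma Lp_eval (m : ℕ) (y : ℝ) : (Lp m).eval y = Lfun m y := by
  rw [Lp, Lfun, eval_finset_sum]
  refine Finset.sum_congr rfl fun i _ => ?_
  simp; ring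



lemma key1 (m : ℕ) (hm : 1 ≤ m) :
    (X : Polynomial ℝ) ^ m ∣ (Ep m).comp (Lp m) - (1 + X) := by
  refine X_pow_dvd_of_small m _ (m + 4) (1/4) (by norm_num) fun t ht => ?_
  rw [eval_sub, eval_comp, Ep_eval, Lp_eval, eval_add, eval_one, eval_X]
  exact Est1 m hm t ht

lemma key2 (m : ℕ) (hm : 1 ≤ m) :
    (X : Polynomial ℝ) ^ m ∣ (Lp m).comp (Ep m - 1) - X := by
  refine X_pow_dvd_of_small m _ (2 * m + 2^(m+2) + 2) (1/4) (by norm_num) fun t ht => ?_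
  rw [eval_sub, eval_comp, eval_sub, eval_one, Ep_eval, Lp_eval, eval_X]
  exact Est2 m hm t ht

lemma X_dvd_Lp (m : ℕ) : (X : Polynomial ℝ) ∣ Lp m := by
  refine Finset.dvd_sum fun i _ => ?_
  exact Dvd.dvd.mul_left ⟨X^i, by rw [pow_succ]; ring⟩ _

-- matrix part
variable {n : ℕ}

lemma exp_nilpotent_eq_aeval (m : ℕ) (Y : Matrix (Fin n) (Fin n) ℂ) (hY : Y ^ m = 0) :
    exp Y = Polynomial.aeval Y (Ep m) := by
  rw [exp_eq_tsum ℂ]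
  show (∑' (j : ℕ), (j.factorial : ℂ)⁻¹ • Y ^ j) = Polynomial.aeval Y (Ep m)
  have hzero : ∀ j ∉ range m, (j.factorial⁻¹ : ℂ) • Y ^ j = 0 := by
    intro j hj
    rw [mem_range, not_lt] at hj
    have : Y ^ j = 0 := by
      rw [show j = m + (j - m) by omega, pow_add, hY, zero_mul]
    simp [this]
  rw [tsum_eq_sum hzero]
  rw [Ep, map_sum]
  refine Finset.sum_congr rfl fun j _ => ?_
  rw [map_mul, aeval_C, map_pow, aeval_X]
  rw [Algebra.algebraMap_eq_smul_one, smul_mul_assoc, one_mul]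
  rw [← algebraMap_smul ℂ ((j.factorial : ℝ))⁻¹ (Y ^ j)]
  norm_num




lemma pow_eq_zero_mono {n : ℕ} {Y : Matrix (Fin n) (Fin n) ℂ} {a b : ℕ} (hab : a ≤ b)
    (h : Y ^ a = 0) : Y ^ b = 0 := by
  rw [show b = a + (b - a) by omega, pow_add, h, zero_mul]

lemma log_of_exp {n : ℕ} (p : ℕ) (hp : 1 ≤ p) (Z : Matrix (Fin n) (Fin n) ℂ)
    (hZ : Z ^ p = 0) : Z = Polynomial.aeval (exp Z - 1) (Lp p) := by
  rw [exp_nilpotent_eq_aeval p Z hZ]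
  have h1 : Polynomial.aeval Z (Ep p) - 1 = Polynomial.aeval Z (Ep p - 1) := by
    rw [map_sub, map_one]
  rw [h1, ← aeval_comp]
  obtain ⟨H, hH⟩ := key2 p hp
  have h2 : (Lp p).comp (Ep p - 1) = X + X^p * H := by
    rw [← hH]; ring
  rw [h2, map_add, aeval_X, map_mul, map_pow, aeval_X, hZ, zero_mul, add_zero]

/-- every unipotent `n × n` complex matrix has a unique nilpotent logarithm. -/
theorem unique_nilpotent_logarithm
    (n : ℕ) (A : Matrix (Fin n) (Fin n) ℂ) (hA : IsNilpotent (A - 1)) :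
    ∃! X : Matrix (Fin n) (Fin n) ℂ, IsNilpotent X ∧ exp X = A := by
  obtain ⟨k, hk⟩ := hA
  set N := A - 1 with hNdef
  have hN : N ^ (k + 1) = 0 := by rw [pow_succ, hk, zero_mul]
  set m := k + 1 with hmdef
  have hm : 1 ≤ m := Nat.le_add_left 1 k
  set Xl := Polynomial.aeval N (Lp m) with hXl
  have hXlm : Xl ^ m = 0 := by
    obtain ⟨q, hq⟩ := X_dvd_Lp m
    rw [hXl, ← map_pow, hq, mul_pow, map_mul, map_pow, aeval_X, hN, zero_mul]
  have hexp : exp Xl = A := by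
    rw [exp_nilpotent_eq_aeval m Xl hXlm, hXl, ← aeval_comp]
    obtain ⟨H, hH⟩ := key1 m hm
    have h2 : (Ep m).comp (Lp m) = 1 + X + X^m * H := by rw [← hH]; ring
    rw [h2, map_add, map_add, map_one, aeval_X, map_mul, map_pow, aeval_X, hN, zero_mul,
      add_zero, hNdef]
    abel
  refine ⟨Xl, ⟨⟨m, hXlm⟩, hexp⟩, ?_⟩
  rintro Z ⟨⟨a, ha⟩, hz⟩
  set p := m + a + 1 with hp
  have hp1 : 1 ≤ p := by omega
  have hZp : Z ^ p = 0 := pow_eq_zero_mono (by omega) ha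
  have hXlp : Xl ^ p = 0 := pow_eq_zero_mono (by omega) hXlm
  have e1 : Z = Polynomial.aeval (exp Z - 1) (Lp p) := log_of_exp p hp1 Z hZp
  have e2 : Xl = Polynomial.aeval (exp Xl - 1) (Lp p) := log_of_exp p hp1 Xl hXlp
  rw [hz] at e1
  rw [hexp] at e2
  rw [e1, e2]
end

section
/- Let V be a finite-dimensional complex vector space and c : V → V a conjugate-linear involution (c(a·v) = conj(a)·c(v) for a ∈ ℂ, and c ∘ c = id). Let I be a finite set with a total order ≤, F an I-filtration of V, and Γ₀, Γ₁ two I-gradings of V both splitting F, such that Γ₀(i) = c(Γ₁(i)) for all i ∈ I. Suppose g ∈ GL(V) satisfies g(Γ₀(i)) = Γ₁(i) for all i and (g − 1)(F(i)) ⊆ F(<i) for all i, and suppose s is a linear endomorphism of V with s − id nilpotent and s ∘ s = g. Then c(s(Γ₀(i))) = s(Γ₀(i)) for all i ∈ I (the median grading is real). -/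
open Submodule

variable {V : Type} [AddCommGroup V] [Module ℂ V] [FiniteDimensional ℂ V]
variable {I : Type} [Fintype I]

lemma aux_sqrt_pow {A : Type*} [CommRing A] (h2 : IsUnit (2 : A)) :
    ∀ (m : ℕ) (ε : A), ε ^ (2 ^ m) = 0 → ∃ v : A, v * v = 1 + ε ∧ IsNilpotent (v - 1) := by
  intro m
  induction m with
  | zero =>
    intro ε hε
    rw [pow_zero, pow_one] at hε
    exact ⟨1, by rw [hε]; ring, by simp⟩
  | succ m ih =>
    intro ε hε
    obtain ⟨i, hi⟩ := h2.exists_left_inv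
    set τ : A := i * ε with hτ
    have hεnil : IsNilpotent ε := ⟨2 ^ (m + 1), hε⟩
    have hτnil : IsNilpotent τ := (Commute.all _ _).isNilpotent_mul_left hεnil
    have hwu : IsUnit (1 + τ) := by
      have := hτnil.isUnit_add_one
      rwa [add_comm] at this
    obtain ⟨wi, hwi⟩ := hwu.exists_right_inv
    have h2τ : 2 * τ = ε := by
      have : 2 * τ = i * 2 * ε := by rw [hτ]; ring
      rw [this, hi, one_mul]
    have hδpow : (-(τ * τ) * (wi * wi)) ^ (2 ^ m) = 0 := by
      have h1 : (τ * τ) ^ (2 ^ m) = 0 := by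
        have he : (τ * τ) ^ (2 ^ m) = τ ^ (2 ^ (m + 1)) := by
          rw [← pow_two, ← pow_mul]
          congr 1
          rw [pow_succ]; ring
        rw [he, hτ, mul_pow, hε, mul_zero]
      have hrw : -(τ * τ) * (wi * wi) = (τ * τ) * (-(wi * wi)) := by ring
      rw [hrw, mul_pow, h1, zero_mul]
    obtain ⟨v', hv', hv'nil⟩ := ih _ hδpow
    refine ⟨(1 + τ) * v', ?_, ?_⟩
    · have key : ((1 + τ) * v') * ((1 + τ) * v') = (1 + τ) * (1 + τ) * (v' * v') := by ring
      rw [key, hv']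
      have h3 : (1 + τ) * (1 + τ) * (1 + -(τ * τ) * (wi * wi))
          = (1 + τ) * (1 + τ) - (τ * τ) * (((1 + τ) * wi) * ((1 + τ) * wi)) := by ring
      rw [h3, hwi]
      have h4 : (1 + τ) * (1 + τ) - τ * τ * (1 * 1) = 1 + 2 * τ := by ring
      rw [h4, h2τ]
    · have h5 : (1 + τ) * v' - 1 = (1 + τ) * (v' - 1) + τ := by ring
      rw [h5]
      exact (Commute.all _ _).isNilpotent_add
        ((Commute.all _ _).isNilpotent_mul_left hv'nil) hτnil

lemma aux_sqrt {A : Type*} [CommRing A] (h2 : IsUnit (2 : A)) {n : A} (hn : IsNilpotent n) :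
    ∃ v : A, v * v = 1 + n ∧ IsNilpotent (v - 1) := by
  obtain ⟨k, hk⟩ := hn
  refine aux_sqrt_pow h2 k n ?_
  have hle : k ≤ 2 ^ k := (Nat.lt_two_pow_self (n := k)).le
  rw [← Nat.sub_add_cancel hle, pow_add, hk, mul_zero]

lemma aux_sqrt_unique {A : Type*} [Ring A] (h2 : IsUnit (2 : A)) {x y : A}
    (hc : Commute x y) (hx : IsNilpotent (x - 1)) (hy : IsNilpotent (y - 1))
    (hxy : x * x = y * y) : x = y := by
  have hsum : IsUnit (x + y) := by
    have hnil : IsNilpotent ((x - 1) + (y - 1)) :=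
      ((hc.sub_left (Commute.one_left y)).sub_right (Commute.one_right _)).isNilpotent_add hx hy
    have hu : IsUnit ((x - 1) + (y - 1) + 2) :=
      hnil.isUnit_add_right_of_commute h2 (Commute.ofNat_right _ 2)
    have heq : (x - 1) + (y - 1) + 2 = x + y := by noncomm_ring; simp
    rwa [heq] at hu
  have hzero : (x - y) * (x + y) = 0 := by
    have hexp : (x - y) * (x + y) = x * x - y * y + (x * y - y * x) := by noncomm_ring
    rw [hexp, hxy, hc.eq]
    noncomm_ring
  have h0 : (x - y) * (x + y) = 0 * (x + y) := by rw [hzero, zero_mul]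
  have := hsum.mul_right_cancel h0
  exact sub_eq_zero.mp this

instance : RingHomSurjective (starRingEnd ℂ) := ⟨fun x => ⟨(starRingEnd ℂ) x, by simp⟩⟩

/-- reality of the median grading.  If `c` is a conjugate-linear involution of
`V`, the gradings `Γ₀, Γ₁` both split `F` and are conjugate to one another (`Γ₀ = c(Γ₁)`),
`g` is the wild monodromy taking `Γ₀` to `Γ₁`, and `s` is a unipotent square root of `g`,
then the median grading `s(Γ₀)` is real: it is preserved by `c`. -/
theorem median_grading_is_real
    (le : I → I → Prop) (hle : IsLinearOrder I le)
    (F Γ₀ Γ₁ : I → Submodule ℂ V) (hF : IsIFiltration le F)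
    (h₀ : SplitsF le F Γ₀) (h₁ : SplitsF le F Γ₁)
    (c : V → V)
    (hc_add : ∀ x y, c (x + y) = c x + c y)
    (hc_smul : ∀ (a : ℂ) (x : V), c (a • x) = (starRingEnd ℂ) a • c x)
    (hc_invol : ∀ x, c (c x) = x)
    (hconj : ∀ i, (Γ₀ i : Set V) = c '' (Γ₁ i : Set V))
    (g : V ≃ₗ[ℂ] V)
    (hgΓ : ∀ i, (Γ₀ i).map (g : V →ₗ[ℂ] V) = Γ₁ i)
    (hgU : g ∈ Ugrp le F)
    (s : Module.End ℂ V) (hs : IsNilpotent (s - 1)) (hss : ∀ v, s (s v) = g v) :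
    ∀ i, c '' (s '' (Γ₀ i : Set V)) = s '' (Γ₀ i : Set V) := by
  haveI := hle
  have hrefl : ∀ j, le j j := fun j => refl_of le j
  have htrans : ∀ a b d, le a b → le b d → le a d := fun a b d h1 h2 => _root_.Trans.trans h1 h2
  have hantisymm : ∀ a b, le a b → le b a → a = b := fun a b h1 h2 => antisymm_of le h1 h2
  -- basic properties of c
  have hc0 : c 0 = 0 := by
    have := hc_smul 0 0; simpa using this
  have hc_sub : ∀ x y, c (x - y) = c x - c y := by
    intro x y
    have h := hc_add (x - y) y
    rw [sub_add_cancel] at h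
    exact eq_sub_of_add_eq h.symm
  -- the semilinear map C
  set C : V →ₛₗ[starRingEnd ℂ] V :=
    { toFun := c, map_add' := hc_add, map_smul' := hc_smul } with hCdef
  have hCapp : ∀ x, C x = c x := fun _ => rfl
  have hC10 : ∀ i, (Γ₁ i).map C = Γ₀ i := by
    intro i
    apply SetLike.ext'
    rw [Submodule.map_coe]
    exact (hconj i).symm
  have himgcc : ∀ (S : Set V), c '' (c '' S) = S := by
    intro S
    rw [Set.image_image]
    have : (fun x => c (c x)) '' S = id '' S := Set.image_congr fun x _ => hc_invol x
    rw [this, Set.image_id]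
  have himgΓ₀ : ∀ i, c '' (Γ₀ i : Set V) = (Γ₁ i : Set V) := by
    intro i
    rw [hconj i, himgcc]
  have hC01 : ∀ i, (Γ₀ i).map C = Γ₁ i := by
    intro i
    apply SetLike.ext'
    rw [Submodule.map_coe]
    exact himgΓ₀ i
  -- C preserves F and filtLT
  have hCF : ∀ i, (F i).map C = F i := by
    intro i
    conv_lhs => rw [h₁.2 i]
    conv_rhs => rw [h₀.2 i]
    simp only [assocFilt, Submodule.map_iSup, hC10]
  have hCFlt : ∀ i, (filtLT le F i).map C = filtLT le F i := by
    intro i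
    simp only [filtLT, Submodule.map_iSup, hCF]
  -- filtration facts
  have hFltF : ∀ i, filtLT le F i ≤ F i := by
    intro i
    exact iSup₂_le fun j hj => hF j i hj.1
  have hΓ₀F : ∀ i, Γ₀ i ≤ F i := by
    intro i
    rw [h₀.2 i]
    exact le_iSup₂ (f := fun j (_ : j ∈ {j | le j i}) => Γ₀ j) i (hrefl i)
  have hgF : ∀ i, ∀ v ∈ F i, g v ∈ F i := by
    intro i v hv
    have h1 : g v - v ∈ F i := hFltF i (hgU i v hv)
    have : g v = (g v - v) + v := by abel
    rw [this]
    exact add_mem h1 hv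
  -- disjointness
  have hdisj : ∀ i, ∀ x ∈ Γ₀ i, x ∈ filtLT le F i → x = 0 := by
    intro i x hx1 hx2
    have hind : Disjoint (Γ₀ i) (⨆ j, ⨆ _ : j ≠ i, Γ₀ j) := h₀.1.1 i
    have hle2 : filtLT le F i ≤ ⨆ j, ⨆ _ : j ≠ i, Γ₀ j := by
      refine iSup₂_le fun j hj => ?_
      rw [h₀.2 j]
      refine iSup₂_le fun k hk => ?_
      have hkne : k ≠ i := by
        intro hki
        subst hki
        exact hj.2 (hantisymm _ _ hj.1 hk)
      exact le_iSup₂ (f := fun k (_ : k ≠ i) => Γ₀ k) k hkne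
    have := hind.le_bot (Submodule.mem_inf.mpr ⟨hx1, hle2 hx2⟩)
    simpa using this
  -- the endomorphism W = c ∘ g ∘ c ∘ g is the identity
  have hW : ∀ x, c (g (c (g x))) = x := by
    set W : Module.End ℂ V :=
      { toFun := fun x => c (g (c (g x)))
        map_add' := by intro x y; simp only [map_add, hc_add]
        map_smul' := by
          intro a x
          simp only [map_smul, hc_smul, RingHom.id_apply, Complex.conj_conj] } with hWdef
    have hWapp : ∀ x, W x = c (g (c (g x))) := fun _ => rfl
    have hWv : ∀ i, ∀ v ∈ Γ₀ i, W v = v := by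
      intro i v hv
      have h1 : g v ∈ Γ₁ i := by
        rw [← hgΓ i]; exact Submodule.mem_map_of_mem hv
      have h2 : c (g v) ∈ Γ₀ i := by
        rw [SetLike.mem_coe.symm, hconj i]; exact ⟨g v, h1, rfl⟩
      have h3 : g (c (g v)) ∈ Γ₁ i := by
        rw [← hgΓ i]; exact Submodule.mem_map_of_mem h2
      have h4 : c (g (c (g v))) ∈ Γ₀ i := by
        rw [SetLike.mem_coe.symm, hconj i]; exact ⟨_, h3, rfl⟩
      have hvF : v ∈ F i := hΓ₀F i hv
      have d1 : g v - v ∈ filtLT le F i := hgU i v hvF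
      have hgvF : g v ∈ F i := hgF i v hvF
      have hcgvF : c (g v) ∈ F i := by
        rw [← hCF i]; exact Submodule.mem_map_of_mem hgvF
      have d2 : g (c (g v)) - c (g v) ∈ filtLT le F i := hgU i _ hcgvF
      have d3 : c (g (c (g v)) - c (g v)) ∈ filtLT le F i := by
        rw [← hCFlt i]; exact Submodule.mem_map_of_mem d2
      rw [hc_sub, hc_invol] at d3
      have dtot : W v - v ∈ filtLT le F i := by
        have heq : W v - v = (c (g (c (g v))) - g v) + (g v - v) := by
          rw [hWapp]; abel
        rw [heq]
        exact add_mem d3 d1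
      have hmem : W v - v ∈ Γ₀ i := by
        rw [hWapp]
        exact sub_mem h4 hv
      have := hdisj i _ hmem dtot
      have := sub_eq_zero.mp this
      exact this
    have htop : (⊤ : Submodule ℂ V) ≤ LinearMap.ker (W - 1) := by
      rw [← h₀.1.2]
      refine iSup_le fun i => ?_
      intro x hx
      rw [LinearMap.mem_ker, LinearMap.sub_apply, Module.End.one_apply, sub_eq_zero]
      exact hWv i x hx
    intro x
    have hx := htop (Submodule.mem_top : x ∈ (⊤ : Submodule ℂ V))
    rw [LinearMap.mem_ker, LinearMap.sub_apply, Module.End.one_apply, sub_eq_zero] at hx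
    exact hx
  have hcgc : ∀ x, c (g (c x)) = g.symm x := by
    intro x
    have := hW (g.symm x)
    rwa [g.apply_symm_apply] at this
  -- the endomorphism t = c ∘ s ∘ c
  set G : Module.End ℂ V := (g : V →ₗ[ℂ] V) with hGdef
  set Gi : Module.End ℂ V := (g.symm : V →ₗ[ℂ] V) with hGidef
  set t : Module.End ℂ V :=
    { toFun := fun x => c (s (c x))
      map_add' := by intro x y; simp only [hc_add, map_add]
      map_smul' := by
        intro a x
        simp only [hc_smul, map_smul, RingHom.id_apply, Complex.conj_conj] } with htdef
  have htapp : ∀ x, t x = c (s (c x)) := fun _ => rfl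
  have hG2 : s * s = G := by
    ext x
    exact hss x
  have ht2 : t * t = Gi := by
    ext x
    show c (s (c (c (s (c x))))) = g.symm x
    rw [hc_invol, hss, hcgc]
  have hGiG : Gi * G = 1 := by
    ext x
    show g.symm (g x) = x
    exact g.symm_apply_apply x
  have hGGi : G * Gi = 1 := by
    ext x
    show g (g.symm x) = x
    exact g.apply_symm_apply x
  have hGnil : IsNilpotent (G - 1) := by
    have heq : G - 1 = (s - 1) * (s + 1) := by rw [← hG2]; noncomm_ring
    rw [heq]
    have hcm : Commute (s - 1) (s + 1) :=
      ((Commute.refl s).sub_left (Commute.one_left s)).add_right (Commute.one_right (s - 1))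
    exact hcm.isNilpotent_mul_right hs
  -- 2 is invertible in End
  have h2mul : (2 : Module.End ℂ V) * ((2⁻¹ : ℂ) • 1) = 1 := by
    ext x
    show (2 : Module.End ℂ V) ((2⁻¹ : ℂ) • x) = x
    rw [Module.End.ofNat_apply, ← Nat.cast_smul_eq_nsmul ℂ, smul_smul]
    norm_num
  have h2E : IsUnit (2 : Module.End ℂ V) :=
    ⟨⟨2, (2⁻¹ : ℂ) • 1, h2mul,
      by rw [(Commute.ofNat_right ((2⁻¹ : ℂ) • (1 : Module.End ℂ V)) 2).eq, h2mul]⟩, rfl⟩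
  -- square root of G as a polynomial in G, via the quotient ring ℂ[X]/((X-1)^k)
  obtain ⟨k, hGk⟩ := hGnil
  set Jid : Ideal (Polynomial ℂ) := Ideal.span {(Polynomial.X - 1 : Polynomial ℂ) ^ k} with hJdef
  have h2B : IsUnit (2 : Polynomial ℂ ⧸ Jid) := by
    have h2C : IsUnit (2 : ℂ) := isUnit_of_invertible 2
    have := h2C.map (algebraMap ℂ (Polynomial ℂ ⧸ Jid))
    rwa [map_ofNat] at this
  have hnB : IsNilpotent (Ideal.Quotient.mk Jid (Polynomial.X - 1)) := by
    refine ⟨k, ?_⟩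
    rw [← map_pow, Ideal.Quotient.eq_zero_iff_mem]
    exact Ideal.subset_span rfl
  obtain ⟨v, hv2, hvnil⟩ := aux_sqrt h2B hnB
  obtain ⟨q, hq⟩ := Ideal.Quotient.mk_surjective v
  have hker : ∀ a ∈ Jid, (Polynomial.aeval G).toRingHom a = 0 := by
    intro a ha
    rw [hJdef, Ideal.mem_span_singleton] at ha
    obtain ⟨b, rfl⟩ := ha
    simp only [AlgHom.toRingHom_eq_coe, RingHom.coe_coe, map_mul, map_pow, map_sub,
      Polynomial.aeval_X, map_one]
    rw [hGk, zero_mul]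
  set ψ : Polynomial ℂ ⧸ Jid →+* Module.End ℂ V :=
    Ideal.Quotient.lift Jid (Polynomial.aeval G).toRingHom hker with hψdef
  have hψmk : ∀ p : Polynomial ℂ, ψ (Ideal.Quotient.mk Jid p) = Polynomial.aeval G p :=
    fun p => Ideal.Quotient.lift_mk Jid _ hker
  set u : Module.End ℂ V := Polynomial.aeval G q with hudef
  have hψv : ψ v = u := by rw [← hq, hψmk]
  have hψn : ψ (Ideal.Quotient.mk Jid (Polynomial.X - 1)) = G - 1 := by
    rw [hψmk]
    simp only [map_sub, Polynomial.aeval_X, map_one]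
  have hu2 : u * u = G := by
    have h := congrArg ψ hv2
    rw [map_mul, map_add, map_one, hψv, hψn] at h
    rw [h]; abel
  have hunil : IsNilpotent (u - 1) := by
    obtain ⟨m, hm⟩ := hvnil
    refine ⟨m, ?_⟩
    have h := congrArg ψ hm
    rw [map_pow, map_sub, map_one, hψv] at h
    simpa using h
  have huA : u ∈ Algebra.adjoin ℂ ({G} : Set (Module.End ℂ V)) := by
    rw [Algebra.adjoin_singleton_eq_range_aeval]
    exact ⟨q, rfl⟩
  -- commutation with members of the subalgebra
  have hcent : ∀ w : Module.End ℂ V, Commute w G →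
      ∀ x ∈ Algebra.adjoin ℂ ({G} : Set (Module.End ℂ V)), Commute w x := by
    intro w hw x hx
    have hsub : Algebra.adjoin ℂ ({G} : Set (Module.End ℂ V)) ≤ Subalgebra.centralizer ℂ {w} := by
      rw [Algebra.adjoin_le_iff]
      rintro y hy
      rw [Set.mem_singleton_iff] at hy
      subst hy
      rw [SetLike.mem_coe, Subalgebra.mem_centralizer_iff]
      rintro z hz
      rw [Set.mem_singleton_iff] at hz
      subst hz
      exact hw.eq
    have hmem := hsub hx
    rw [Subalgebra.mem_centralizer_iff] at hmem
    exact hmem w rfl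
  have hsG : Commute s G := by
    rw [← hG2]
    exact (Commute.refl s).mul_right (Commute.refl s)
  have hsu : Commute s u := hcent s hsG u huA
  have hs_eq_u : s = u := aux_sqrt_unique h2E hsu hs hunil (by rw [hG2, hu2])
  -- t commutes with s
  have htGi : Commute t Gi := by
    rw [← ht2]
    exact (Commute.refl t).mul_right (Commute.refl t)
  have htG : Commute t G := by
    show t * G = G * t
    calc t * G = (G * Gi) * (t * G) := by rw [hGGi, one_mul]
      _ = G * (Gi * t) * G := by noncomm_ring
      _ = G * (t * Gi) * G := by rw [htGi.symm.eq]
      _ = (G * t) * (Gi * G) := by noncomm_ring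
      _ = G * t := by rw [hGiG, mul_one]
  have hts_comm : Commute t s := by
    rw [hs_eq_u]
    exact hcent t htG u huA
  -- t is unipotent
  have htnil : IsNilpotent (t - 1) := by
    obtain ⟨k, hk⟩ := hs
    refine ⟨k, ?_⟩
    have hpt : ∀ (m : ℕ) (x : V), ((t - 1) ^ m : Module.End ℂ V) x = c (((s - 1) ^ m : Module.End ℂ V) (c x)) := by
      intro m
      induction m with
      | zero => intro x; simp [hc_invol]
      | succ m ihm =>
        intro x
        rw [pow_succ, Module.End.mul_apply, ihm]
        have h1 : (t - 1) x = c ((s - 1) (c x)) := by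
          rw [LinearMap.sub_apply, Module.End.one_apply, LinearMap.sub_apply,
            Module.End.one_apply, hc_sub, hc_invol, htapp]
        rw [h1, hc_invol, pow_succ, Module.End.mul_apply]
    ext x
    rw [hpt k x, hk]
    simp [hc0]
  -- t * s = 1
  have hts1 : t * s = 1 := by
    refine aux_sqrt_unique h2E (Commute.one_right _) ?_ (by simp) ?_
    · have heq : t * s - 1 = t * (s - 1) + (t - 1) := by noncomm_ring
      rw [heq]
      have cts1 : Commute t (t - 1) := (Commute.refl t).sub_right (Commute.one_right t)
      have cs1t1 : Commute (s - 1) (t - 1) :=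
        (hts_comm.symm.sub_left (Commute.one_left t)).sub_right (Commute.one_right (s - 1))
      have hn1 : IsNilpotent (t * (s - 1)) :=
        (hts_comm.sub_right (Commute.one_right t)).isNilpotent_mul_left hs
      exact (Commute.mul_left cts1 cs1t1).isNilpotent_add hn1 htnil
    · have hstep : (t * s) * (t * s) = (t * t) * (s * s) := by
        calc (t * s) * (t * s) = t * (s * t) * s := by noncomm_ring
          _ = t * (t * s) * s := by rw [hts_comm.symm.eq]
          _ = (t * t) * (s * s) := by noncomm_ring
      rw [hstep, ht2, hG2, hGiG, one_mul]
  have htGs : t * G = s := by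
    rw [← hG2, ← mul_assoc, hts1, one_mul]
  -- conclusion
  intro i
  have step1 : c '' (s '' (Γ₀ i : Set V)) = t '' (c '' (Γ₀ i : Set V)) := by
    rw [Set.image_image, Set.image_image]
    refine Set.image_congr fun x _ => ?_
    show c (s x) = t (c x)
    rw [htapp, hc_invol]
  have step2 : (Γ₁ i : Set V) = (g : V →ₗ[ℂ] V) '' (Γ₀ i : Set V) := by
    rw [← hgΓ i, Submodule.map_coe]
  have step3 : t '' ((g : V →ₗ[ℂ] V) '' (Γ₀ i : Set V)) = s '' (Γ₀ i : Set V) := by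
    rw [Set.image_image]
    refine Set.image_congr fun x _ => ?_
    show t ((g : V →ₗ[ℂ] V) x) = s x
    rw [← Module.End.mul_apply, htGs]
  rw [step1, himgΓ₀ i, step2, step3]
end

section
/- Let V be a finite-dimensional complex vector space, I a finite set, ≺ a strict partial order on I (irreflexive and transitive), and Γ₁, Γ₂ two I-gradings of V. Then the following are equivalent: (1) there exists g ∈ Sto(Γ₁,≺) with g(Γ₁(i)) = Γ₂(i) for all i ∈ I; (2) there exists g ∈ Sto(Γ₂,≺) with g(Γ₁(i)) = Γ₂(i) for all i ∈ I; (3) for every total order ≤ on I extending ≺ (i.e. such that i ≺ j implies i < j), the associated filtrations agree: F(Γ₁,≤) = F(Γ₂,≤). -/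
open Submodule

variable {V : Type} [AddCommGroup V] [Module ℂ V] [FiniteDimensional ℂ V]
variable {I : Type} [Fintype I]

/-- `F` is an `I`-filtration of `V` with respect to the order `le`. -/
def IsFiltration' (le : I → I → Prop) (F : I → Submodule ℂ V) : Prop :=
  ∀ i j, le i j → F i ≤ F j

/-- The Stokes group `Sto(Γ,≺)` of a grading `Γ` and a strict partial order `≺` on `I`:
all `g ∈ GL(V)` with `(g − 1)(Γ(j)) ⊆ Σ_{i ≺ j} Γ(i)` for all `j`. -/
def Sto (Γ : I → Submodule ℂ V) (prec : I → I → Prop) : Set (V ≃ₗ[ℂ] V) :=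
  {g | ∀ j, ∀ v ∈ Γ j, g v - v ∈ ⨆ i ∈ {i | prec i j}, Γ i}


open FiniteDimensional Module DirectSum

section Helpers


-- finrank of biSup over finset of independent family
theorem myfinrank_biSup (Γ : I → Submodule ℂ V) (hInd : iSupIndep Γ) (t : Finset I) :
    finrank ℂ ↥(⨆ j ∈ t, Γ j) = ∑ j ∈ t, finrank ℂ ↥(Γ j) := by
  classical
  induction t using Finset.induction with
  | empty => simp
  | @insert a t ha ih =>
    have hsup : (⨆ j ∈ insert a t, Γ j) = Γ a ⊔ ⨆ j ∈ t, Γ j := by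
      simp [Finset.mem_insert, iSup_or, iSup_sup_eq]
    have hdisj : Disjoint (Γ a) (⨆ j ∈ t, Γ j) := by
      refine (hInd a).mono_right ?_
      exact iSup₂_le fun j hj => le_iSup₂ (f := fun j (_ : j ≠ a) => Γ j) j
        (by rintro rfl; exact ha hj)
    have := Submodule.finrank_sup_add_finrank_inf_eq (Γ a) (⨆ j ∈ t, Γ j)
    rw [hdisj.eq_bot, finrank_bot, add_zero] at this
    rw [hsup, this, ih, Finset.sum_insert ha]

theorem myfinrank_biSup_set (Γ : I → Submodule ℂ V) (hInd : iSupIndep Γ) (s : Set I) [Fintype ↥s] :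
    finrank ℂ ↥(⨆ j ∈ s, Γ j) = ∑ j ∈ s.toFinset, finrank ℂ ↥(Γ j) := by
  classical
  have h : (⨆ j ∈ s.toFinset, Γ j) = ⨆ j ∈ s, Γ j := by simp only [Set.mem_toFinset]
  rw [← myfinrank_biSup Γ hInd s.toFinset, h]

open Classical in
theorem myWsup_inf (Γ : I → Submodule ℂ V) (hInd : iSupIndep Γ) (s t : Set I) :
    (⨆ j ∈ s, Γ j) ⊓ (⨆ j ∈ t, Γ j) = ⨆ j ∈ s ∩ t, Γ j := by
  classical
  have hle : (⨆ j ∈ s ∩ t, Γ j) ≤ (⨆ j ∈ s, Γ j) ⊓ (⨆ j ∈ t, Γ j) :=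
    le_inf (biSup_mono fun j hj => hj.1) (biSup_mono fun j hj => hj.2)
  have hsup : (⨆ j ∈ s, Γ j) ⊔ (⨆ j ∈ t, Γ j) = ⨆ j ∈ s ∪ t, Γ j := by
    rw [iSup_union]
  have hrk := Submodule.finrank_sup_add_finrank_inf_eq (⨆ j ∈ s, Γ j) (⨆ j ∈ t, Γ j)
  rw [hsup, myfinrank_biSup_set Γ hInd, myfinrank_biSup_set Γ hInd s,
    myfinrank_biSup_set Γ hInd t] at hrk
  have hcard : ∑ j ∈ (s ∪ t).toFinset, finrank ℂ ↥(Γ j)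
      + ∑ j ∈ (s ∩ t).toFinset, finrank ℂ ↥(Γ j)
      = ∑ j ∈ s.toFinset, finrank ℂ ↥(Γ j) + ∑ j ∈ t.toFinset, finrank ℂ ↥(Γ j) := by
    rw [Set.toFinset_union, Set.toFinset_inter]
    exact Finset.sum_union_inter
  have : finrank ℂ ↥((⨆ j ∈ s, Γ j) ⊓ (⨆ j ∈ t, Γ j)) = finrank ℂ ↥(⨆ j ∈ s ∩ t, Γ j) := by
    rw [myfinrank_biSup_set Γ hInd]; omega
  exact (Submodule.eq_of_le_of_finrank_le hle this.le).symm

theorem mem_Wsup_iInter (Γ : I → Submodule ℂ V) (hInd : iSupIndep Γ) (htop : ⨆ i, Γ i = ⊤)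
    (c : I → Set I) {v : V} (hv : ∀ j, v ∈ ⨆ k ∈ c j, Γ k) :
    v ∈ ⨆ k ∈ ⋂ j, c j, Γ k := by
  classical
  have main : ∀ t : Finset I, v ∈ ⨆ k ∈ ⋂ j ∈ (t : Set I), c j, Γ k := by
    intro t
    induction t using Finset.induction with
    | empty =>
      simp only [Finset.coe_empty, Set.biInter_empty]
      have : (⨆ k ∈ (Set.univ : Set I), Γ k) = ⊤ := by
        rw [← htop]; simp
      rw [this]; trivial
    | @insert a t ha ih =>
      have : (⋂ j ∈ ((insert a t : Finset I) : Set I), c j) = c a ∩ ⋂ j ∈ (t : Set I), c j := by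
        simp [Set.biInter_insert]
      rw [this, ← myWsup_inf Γ hInd]
      exact ⟨hv a, ih⟩
  have := main Finset.univ
  simpa using this

theorem components_eq_zero (Γ : I → Submodule ℂ V) (hInd : iSupIndep Γ) (f : I → V)
    (hf : ∀ i, f i ∈ Γ i) (hsum : ∑ i, f i = 0) : ∀ i, f i = 0 := by
  classical
  intro i
  have h1 : f i = -∑ j ∈ Finset.univ.erase i, f j := by
    have := Finset.add_sum_erase Finset.univ f (Finset.mem_univ i)
    rw [hsum] at this
    have h := this
    have : f i = -∑ x ∈ Finset.univ.erase i, f x := by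
      rw [eq_neg_iff_add_eq_zero]; exact h
    exact this
  have h2 : f i ∈ ⨆ j ≠ i, Γ j := by
    rw [h1]
    refine neg_mem (Submodule.sum_mem _ fun j hj => ?_)
    exact le_iSup₂ (f := fun j (_ : j ≠ i) => Γ j) j (Finset.ne_of_mem_erase hj) (hf j)
  exact (Submodule.disjoint_def.mp (hInd i)) _ (hf i) h2

section OrderExt
variable {I : Type} (prec : I → I → Prop)
  (hirr : ∀ i, ¬ prec i i) (htrans : ∀ i j k, prec i j → prec j k → prec i k)

include hirr in
theorem linext_of_partial {r : I → I → Prop} (hpo : IsPartialOrder I r)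
    (hr : ∀ a b, prec a b → r a b) :
    ∃ le : I → I → Prop, IsLinearOrder I le ∧ (∀ i j, prec i j → le i j ∧ ¬ le j i)
      ∧ ∀ a b, r a b → le a b := by
  haveI := hpo
  obtain ⟨s, hs, hrs⟩ := extend_partialOrder r
  refine ⟨s, hs, fun i j hij => ⟨hrs _ _ (hr _ _ hij), fun hji => ?_⟩, fun a b h => hrs _ _ h⟩
  have : j = i := hs.toIsPartialOrder.toAntisymm.antisymm _ _ hji (hrs _ _ (hr _ _ hij))
  subst this
  exact hirr j hij

include hirr htrans in
theorem exists_linext :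
    ∃ le : I → I → Prop, IsLinearOrder I le ∧ ∀ i j, prec i j → le i j ∧ ¬ le j i := by
  have hpo : IsPartialOrder I (fun a b => prec a b ∨ a = b) := by
    refine { refl := fun a => Or.inr rfl, trans := ?_, antisymm := ?_ }
    · rintro a b c (hab | rfl) (hbc | rfl)
      · exact Or.inl (htrans _ _ _ hab hbc)
      · exact Or.inl hab
      · exact Or.inl hbc
      · exact Or.inr rfl
    · rintro a b (hab | rfl) hba
      · rcases hba with hba | rfl
        · exact absurd (htrans _ _ _ hab hba) (hirr a)
        · exact absurd hab (hirr _)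
      · rfl
  obtain ⟨le, h1, h2, _⟩ := linext_of_partial prec hirr hpo (fun a b h => Or.inl h)
  exact ⟨le, h1, h2⟩

include hirr htrans in
/-- extension with `i < j` when `¬ prec j i`, `j ≠ i`. -/
theorem exists_linext_not {i j : I} (hne : j ≠ i) (hnp : ¬ prec j i) :
    ∃ le : I → I → Prop, IsLinearOrder I le ∧ (∀ a b, prec a b → le a b ∧ ¬ le b a)
      ∧ ¬ le j i := by
  let p : I → I → Prop := fun a b => prec a b ∨ a = b
  have ptrans : ∀ a b c, p a b → p b c → p a c := by
    rintro a b c (h | rfl) (h' | rfl)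
    · exact Or.inl (htrans _ _ _ h h')
    · exact Or.inl h
    · exact Or.inl h'
    · exact Or.inr rfl
  have pstrict : ∀ a b c, p a b → prec b c → prec a c := by
    rintro a b c (h | rfl) h' 
    · exact htrans _ _ _ h h'
    · exact h'
  have strictp : ∀ a b c, prec a b → p b c → prec a c := by
    rintro a b c h (h' | rfl)
    · exact htrans _ _ _ h h'
    · exact h
  let r : I → I → Prop := fun a b => prec a b ∨ a = b ∨ (p a i ∧ p j b)
  have hji' : ∀ a b, p j a → p a b → p b i → False := by
    rintro a b hja hab hbi
    rcases ptrans _ _ _ (ptrans _ _ _ hja hab) hbi with h | rfl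
    · exact hnp h
    · exact hne rfl
  have hpo : IsPartialOrder I r := by
    refine { refl := fun a => Or.inr (Or.inl rfl), trans := ?_, antisymm := ?_ }
    · rintro a b c (hab | rfl | ⟨hai, hjb⟩) (hbc | rfl | ⟨hbi, hjc⟩)
      · exact Or.inl (htrans _ _ _ hab hbc)
      · exact Or.inl hab
      · exact Or.inr (Or.inr ⟨Or.inl (strictp _ _ _ hab hbi), hjc⟩)
      · exact Or.inl hbc
      · exact Or.inr (Or.inl rfl)
      · exact Or.inr (Or.inr ⟨hbi, hjc⟩)
      · exact Or.inr (Or.inr ⟨hai, Or.inl (pstrict _ _ _ hjb hbc)⟩)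
      · exact Or.inr (Or.inr ⟨hai, hjb⟩)
      · exact Or.inr (Or.inr ⟨hai, hjc⟩)
    · rintro a b (hab | rfl | ⟨hai, hjb⟩) hba
      · rcases hba with hba | rfl | ⟨hbi, hja⟩
        · exact absurd (htrans _ _ _ hab hba) (hirr a)
        · exact absurd hab (hirr _)
        · exact absurd (hji' _ _ hja (Or.inl hab) hbi) not_false
      · rfl
      · rcases hba with hba | rfl | ⟨hbi, hja⟩
        · exact absurd (hji' _ _ hjb (Or.inl hba) hai) not_false
        · rfl
        · exact absurd (hji' _ _ hja (Or.inr rfl) hai) not_false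
  obtain ⟨le, h1, h2, h3⟩ := linext_of_partial prec hirr hpo (fun a b h => Or.inl h)
  refine ⟨le, h1, h2, fun hji => ?_⟩
  have hij : le i j := h3 i j (Or.inr (Or.inr ⟨Or.inr rfl, Or.inr rfl⟩))
  exact hne (h1.toIsPartialOrder.toAntisymm.antisymm _ _ hji hij)

end OrderExt

section StoLemmas
variable {prec : I → I → Prop} {Γ : I → Submodule ℂ V} {g : V ≃ₗ[ℂ] V}

theorem sto_diff_mem (hg : g ∈ Sto Γ prec)
    {s : Set I} (hs : ∀ ⦃i j⦄, prec i j → j ∈ s → i ∈ s)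
    {v : V} (hv : v ∈ ⨆ j ∈ s, Γ j) :
    g v - v ∈ ⨆ j ∈ s, Γ j := by
  rw [show (⨆ j ∈ s, Γ j) = ⨆ j : s, Γ (j : I) from iSup_subtype'] at hv
  refine Submodule.iSup_induction (motive := fun v => g v - v ∈ ⨆ j ∈ s, Γ j) _ hv ?_ (by simp) ?_
  · rintro ⟨j, hj⟩ x hx
    have hle : (⨆ i ∈ {i | prec i j}, Γ i) ≤ ⨆ i ∈ s, Γ i :=
      biSup_mono fun i hi => hs hi hj
    exact hle (hg j x hx)
  · intro x y hx hy
    have h : g (x + y) - (x + y) = (g x - x) + (g y - y) := by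
      rw [map_add]; abel
    rw [h]; exact add_mem hx hy

theorem sto_mem_of_mem (hg : g ∈ Sto Γ prec)
    {s : Set I} (hs : ∀ ⦃i j⦄, prec i j → j ∈ s → i ∈ s)
    {v : V} (hv : v ∈ ⨆ j ∈ s, Γ j) :
    g v ∈ ⨆ j ∈ s, Γ j := by
  have := sto_diff_mem hg hs hv
  have h : g v = v + (g v - v) := by abel
  rw [h]; exact add_mem hv this

theorem sto_map_eq (hg : g ∈ Sto Γ prec)
    {s : Set I} (hs : ∀ ⦃i j⦄, prec i j → j ∈ s → i ∈ s) :
    (⨆ j ∈ s, Γ j).map (g : V →ₗ[ℂ] V) = ⨆ j ∈ s, Γ j := by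
  have hle : (⨆ j ∈ s, Γ j).map (g : V →ₗ[ℂ] V) ≤ ⨆ j ∈ s, Γ j := by
    rintro _ ⟨x, hx, rfl⟩
    exact sto_mem_of_mem hg hs hx
  exact Submodule.eq_of_le_of_finrank_le hle (LinearEquiv.finrank_map_eq g _).ge

theorem sto_symm_mem_of_mem (hg : g ∈ Sto Γ prec)
    {s : Set I} (hs : ∀ ⦃i j⦄, prec i j → j ∈ s → i ∈ s)
    {v : V} (hv : v ∈ ⨆ j ∈ s, Γ j) :
    g.symm v ∈ ⨆ j ∈ s, Γ j := by
  rw [← sto_map_eq hg hs] at hv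
  obtain ⟨x, hx, rfl⟩ := hv
  simpa using hx

theorem sto_inv (htrans : ∀ i j k, prec i j → prec j k → prec i k)
    (hg : g ∈ Sto Γ prec) : g.symm ∈ Sto Γ prec := by
  intro j v hv
  have hdc : ∀ ⦃a b⦄, prec a b → b ∈ {i | prec i j} → a ∈ {i | prec i j} :=
    fun a b hab hb => htrans _ _ _ hab hb
  have h1 : g v - v ∈ ⨆ i ∈ {i | prec i j}, Γ i := hg j v hv
  have h2 : g.symm (g v - v) ∈ ⨆ i ∈ {i | prec i j}, Γ i := sto_symm_mem_of_mem hg hdc h1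
  have h3 : g.symm v - v = -(g.symm (g v - v)) := by
    rw [map_sub]
    simp
  rw [h3]
  exact neg_mem h2

theorem sto_transfer (hirr : ∀ i, ¬ prec i i)
    (htrans : ∀ i j k, prec i j → prec j k → prec i k)
    {Γ₁ Γ₂ : I → Submodule ℂ V} (h₁ : iSupIndep Γ₁) (h₂ : iSupIndep Γ₂)
    (hg : g ∈ Sto Γ₁ prec) (hmap : ∀ i, (Γ₁ i).map (g : V →ₗ[ℂ] V) = Γ₂ i) :
    g ∈ Sto Γ₂ prec := by
  classical
  intro j v hv
  set S : Submodule ℂ V := ⨆ i ∈ {i | prec i j}, Γ₁ i with hS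
  set T : Submodule ℂ V := ⨆ i ∈ {i | prec i j}, Γ₂ i with hT
  have hdc : ∀ ⦃a b⦄, prec a b → b ∈ {i | prec i j} → a ∈ {i | prec i j} :=
    fun a b hab hb => htrans _ _ _ hab hb
  have hTS : T ≤ S := by
    refine iSup₂_le fun i hi => ?_
    rw [← hmap i]
    rintro _ ⟨w, hw, rfl⟩
    have h1 : (w : V) ∈ S := (le_iSup₂ (f := fun i (_ : i ∈ {i | prec i j}) => Γ₁ i) i hi) hw
    exact sto_mem_of_mem hg hdc h1
  have hrk : finrank ℂ S = finrank ℂ T := by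
    rw [hS, hT, myfinrank_biSup_set Γ₁ h₁, myfinrank_biSup_set Γ₂ h₂]
    refine Finset.sum_congr rfl fun i _ => ?_
    rw [← hmap i, LinearEquiv.finrank_map_eq]
  have hTSeq : T = S := Submodule.eq_of_le_of_finrank_le hTS hrk.le
  rw [hTSeq]
  rw [← hmap j] at hv
  obtain ⟨w, hw, rfl⟩ := hv
  have hu : g w - w ∈ S := hg j w hw
  have h5 : g (g w) - g w = g (g w - w) := by rw [map_sub]
  simp only [LinearEquiv.coe_coe]
  rw [h5]
  exact sto_mem_of_mem hg hdc hu

end StoLemmas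

section Main
variable (prec : I → I → Prop)

/-- Direction (1) ⇒ (3). -/
theorem sto_imp_filt {Γ₁ Γ₂ : I → Submodule ℂ V} (h₁ : iSupIndep Γ₁) (h₂ : iSupIndep Γ₂)
    {g : V ≃ₗ[ℂ] V} (hg : g ∈ Sto Γ₁ prec)
    (hmap : ∀ i, (Γ₁ i).map (g : V →ₗ[ℂ] V) = Γ₂ i)
    (le : I → I → Prop) (hlin : IsLinearOrder I le)
    (hext : ∀ i j, prec i j → le i j ∧ ¬ le j i) (i : I) :
    assocFilt Γ₁ le i = assocFilt Γ₂ le i := by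
  classical
  have hle : assocFilt Γ₂ le i ≤ assocFilt Γ₁ le i := by
    refine iSup₂_le fun j hj => ?_
    rw [← hmap j]
    rintro _ ⟨w, hw, rfl⟩
    have h1 : w ∈ assocFilt Γ₁ le i :=
      (le_iSup₂ (f := fun j (_ : j ∈ {j | le j i}) => Γ₁ j) j hj) hw
    have h2 : g w - w ∈ assocFilt Γ₁ le i := by
      have hmono : (⨆ k ∈ {k | prec k j}, Γ₁ k) ≤ assocFilt Γ₁ le i := by
        refine biSup_mono fun k hk => ?_
        exact hlin.toIsPartialOrder.toIsPreorder.toIsTrans.trans _ _ _ (hext k j hk).1 hj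
      exact hmono (hg j w hw)
    have : (g : V →ₗ[ℂ] V) w = w + (g w - w) := by
      simp only [LinearEquiv.coe_coe]; abel
    rw [this]
    exact add_mem h1 h2
  have hrk : finrank ℂ ↥(assocFilt Γ₁ le i) = finrank ℂ ↥(assocFilt Γ₂ le i) := by
    rw [assocFilt, assocFilt, myfinrank_biSup_set Γ₁ h₁, myfinrank_biSup_set Γ₂ h₂]
    refine Finset.sum_congr rfl fun j _ => ?_
    rw [← hmap j, LinearEquiv.finrank_map_eq]
  exact (Submodule.eq_of_le_of_finrank_le hle hrk.le).symm

/-- Key consequence of (3): each `Γ₂ i` sits inside `Γ₁ i + Σ_{j ≺ i} Γ₁ j`. -/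
theorem key_le (hirr : ∀ i, ¬ prec i i) (htrans : ∀ i j k, prec i j → prec j k → prec i k)
    {Γ₁ Γ₂ : I → Submodule ℂ V} (h₁ : IsGrading Γ₁) (h₂ : IsGrading Γ₂)
    (h3 : ∀ le : I → I → Prop, IsLinearOrder I le → (∀ i j, prec i j → le i j ∧ ¬ le j i) →
        ∀ i, assocFilt Γ₁ le i = assocFilt Γ₂ le i) (i : I) :
    Γ₂ i ≤ ⨆ j ∈ {j | prec j i ∨ j = i}, Γ₁ j := by
  intro v hv
  have hchoice : ∀ j : I, ∃ le : I → I → Prop, IsLinearOrder I le ∧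
      (∀ a b, prec a b → le a b ∧ ¬ le b a) ∧ (¬ (prec j i ∨ j = i) → ¬ le j i) := by
    intro j
    by_cases hj : prec j i ∨ j = i
    · obtain ⟨le, ha, hb⟩ := exists_linext prec hirr htrans
      exact ⟨le, ha, hb, fun h => absurd hj h⟩
    · push_neg at hj
      obtain ⟨le, ha, hb, hc⟩ := exists_linext_not prec hirr htrans hj.2 hj.1
      exact ⟨le, ha, hb, fun _ => hc⟩
  choose L hL1 hL2 hL3 using hchoice
  have hvW : ∀ j, v ∈ ⨆ k ∈ {k | L j k i}, Γ₁ k := by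
    intro j
    have hrefl : L j i i := by
      haveI := hL1 j
      exact refl_of (L j) i
    have hmem : v ∈ assocFilt Γ₂ (L j) i :=
      (le_iSup₂ (f := fun k (_ : k ∈ {k | L j k i}) => Γ₂ k) i hrefl) hv
    rw [← h3 (L j) (hL1 j) (hL2 j) i] at hmem
    exact hmem
  have hmem := mem_Wsup_iInter Γ₁ h₁.1 h₁.2 (fun j => {k | L j k i}) hvW
  have hsub : (⨆ k ∈ ⋂ j, {k | L j k i}, Γ₁ k) ≤ ⨆ j ∈ {j | prec j i ∨ j = i}, Γ₁ j := by
    refine biSup_mono fun k hk => ?_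
    simp only [Set.mem_iInter] at hk
    by_contra hkc
    exact (hL3 k hkc) (hk k)
  exact hsub hmem

end Main

/-- Direction (3) ⇒ (1): construction of the Stokes-group element. -/
theorem exists_sto (prec : I → I → Prop) (hirr : ∀ i, ¬ prec i i)
    (htrans : ∀ i j k, prec i j → prec j k → prec i k)
    {Γ₁ Γ₂ : I → Submodule ℂ V} (h₁ : IsGrading Γ₁) (h₂ : IsGrading Γ₂)
    (h3 : ∀ le : I → I → Prop, IsLinearOrder I le → (∀ i j, prec i j → le i j ∧ ¬ le j i) →
        ∀ i, assocFilt Γ₁ le i = assocFilt Γ₂ le i) :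
    ∃ g ∈ Sto Γ₁ prec, ∀ i, (Γ₁ i).map (g : V →ₗ[ℂ] V) = Γ₂ i := by
  classical
  have key12 : ∀ i, Γ₂ i ≤ ⨆ j ∈ {j | prec j i ∨ j = i}, Γ₁ j :=
    key_le prec hirr htrans h₁ h₂ h3
  have key21 : ∀ i, Γ₁ i ≤ ⨆ j ∈ {j | prec j i ∨ j = i}, Γ₂ j :=
    key_le prec hirr htrans h₂ h₁ (fun le hl he i => (h3 le hl he i).symm)
  have int1 : DirectSum.IsInternal Γ₁ :=
    DirectSum.isInternal_submodule_of_iSupIndep_of_iSup_eq_top h₁.1 h₁.2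
  have int2 : DirectSum.IsInternal Γ₂ :=
    DirectSum.isInternal_submodule_of_iSupIndep_of_iSup_eq_top h₂.1 h₂.2
  set e₁ : (⨁ i, ↥(Γ₁ i)) ≃ₗ[ℂ] V :=
    LinearEquiv.ofBijective (DirectSum.coeLinearMap Γ₁) int1 with he₁
  set e₂ : (⨁ i, ↥(Γ₂ i)) ≃ₗ[ℂ] V :=
    LinearEquiv.ofBijective (DirectSum.coeLinearMap Γ₂) int2 with he₂
  set π₁ : I → (V →ₗ[ℂ] V) := fun i =>
    (Γ₁ i).subtype ∘ₗ (DirectSum.component ℂ I (fun i => ↥(Γ₁ i)) i) ∘ₗ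
      (e₁.symm : V →ₗ[ℂ] (⨁ i, ↥(Γ₁ i))) with hπ₁
  set π₂ : I → (V →ₗ[ℂ] V) := fun i =>
    (Γ₂ i).subtype ∘ₗ (DirectSum.component ℂ I (fun i => ↥(Γ₂ i)) i) ∘ₗ
      (e₂.symm : V →ₗ[ℂ] (⨁ i, ↥(Γ₂ i))) with hπ₂
  have π₁_mem : ∀ i v, π₁ i v ∈ Γ₁ i := fun i v => Submodule.coe_mem _
  have π₂_mem : ∀ i v, π₂ i v ∈ Γ₂ i := fun i v => Submodule.coe_mem _
  have π₁_same : ∀ i v, v ∈ Γ₁ i → π₁ i v = v := by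
    intro i v hv
    show ((e₁.symm v) i : V) = v
    rw [int1.ofBijective_coeLinearMap_of_mem hv]
  have π₂_same : ∀ i v, v ∈ Γ₂ i → π₂ i v = v := by
    intro i v hv
    show ((e₂.symm v) i : V) = v
    rw [int2.ofBijective_coeLinearMap_of_mem hv]
  have π₁_ne : ∀ i j v, v ∈ Γ₁ j → j ≠ i → π₁ i v = 0 := by
    intro i j v hv hne
    show ((e₁.symm v) i : V) = 0
    rw [int1.ofBijective_coeLinearMap_of_mem_ne hne hv]
    rfl
  have π₂_ne : ∀ i j v, v ∈ Γ₂ j → j ≠ i → π₂ i v = 0 := by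
    intro i j v hv hne
    show ((e₂.symm v) i : V) = 0
    rw [int2.ofBijective_coeLinearMap_of_mem_ne hne hv]
    rfl
  have coesum : ∀ x : ⨁ i, ↥(Γ₁ i), DirectSum.coeLinearMap Γ₁ x = ∑ i, (x i : V) := by
    intro x
    conv_lhs => rw [← DirectSum.sum_univ_of x]
    rw [map_sum]
    simp
  have π₁_sum : ∀ v, ∑ i, π₁ i v = v := by
    intro v
    have h := coesum (e₁.symm v)
    have h2 : DirectSum.coeLinearMap Γ₁ (e₁.symm v) = v := e₁.apply_symm_apply v
    rw [h2] at h
    exact h.symm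
  set f : V →ₗ[ℂ] V := ∑ i, (π₂ i) ∘ₗ (π₁ i) with hf
  have f_on : ∀ j v, v ∈ Γ₁ j → f v = π₂ j v := by
    intro j v hv
    rw [hf, LinearMap.sum_apply]
    rw [Finset.sum_eq_single j]
    · rw [LinearMap.comp_apply, π₁_same j v hv]
    · intro i _ hij
      rw [LinearMap.comp_apply, π₁_ne i j v hv (Ne.symm hij), map_zero]
    · intro h; exact absurd (Finset.mem_univ j) h
  have pr : ∀ j v, v ∈ (⨆ k ∈ {k | prec k j ∨ k = j}, Γ₂ k) →
      v - π₂ j v ∈ ⨆ k ∈ {k | prec k j}, Γ₂ k := by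
    intro j v hv
    rw [show (⨆ k ∈ {k | prec k j ∨ k = j}, Γ₂ k) = ⨆ k : {k | prec k j ∨ k = j}, Γ₂ (k : I)
      from iSup_subtype'] at hv
    refine Submodule.iSup_induction
      (motive := fun v => v - π₂ j v ∈ ⨆ k ∈ {k | prec k j}, Γ₂ k) _ hv ?_ (by simp) ?_
    · rintro ⟨k, hk⟩ x hx
      rcases hk with hk | rfl
      · rw [π₂_ne j k x hx (by rintro rfl; exact hirr k hk), sub_zero]
        exact (le_iSup₂ (f := fun k (_ : k ∈ {k | prec k j}) => Γ₂ k) k hk) hx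
      · rw [π₂_same _ x hx, sub_self]; exact zero_mem _
    · intro x y hx hy
      have h : (x + y) - π₂ j (x + y) = (x - π₂ j x) + (y - π₂ j y) := by
        rw [map_add]; abel
      rw [h]; exact add_mem hx hy
  have TleS : ∀ i, (⨆ k ∈ {k | prec k i}, Γ₂ k) ≤ ⨆ k ∈ {k | prec k i}, Γ₁ k := by
    intro i
    refine iSup₂_le fun k hk => le_trans (key12 k) ?_
    refine biSup_mono fun m hm => ?_
    rcases hm with hm | rfl
    · exact htrans m k i hm hk
    · exact hk
  have hdiff : ∀ j v, v ∈ Γ₁ j → v - π₂ j v ∈ ⨆ k ∈ {k | prec k j}, Γ₂ k :=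
    fun j v hv => pr j v (key21 j hv)
  have hinj : Function.Injective f := by
    rw [← LinearMap.ker_eq_bot, LinearMap.ker_eq_bot']
    intro v hv0
    have hcomp : ∀ i, π₂ i (π₁ i v) = 0 := by
      refine components_eq_zero Γ₂ h₂.1 (fun i => π₂ i (π₁ i v))
        (fun i => π₂_mem i _) ?_
      have : ∑ i, π₂ i (π₁ i v) = f v := by
        rw [hf, LinearMap.sum_apply]
        rfl
      rw [this, hv0]
    have hzero : ∀ i, π₁ i v = 0 := by
      intro i
      have h1 : π₁ i v - π₂ i (π₁ i v) ∈ ⨆ k ∈ {k | prec k i}, Γ₂ k :=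
        hdiff i _ (π₁_mem i v)
      rw [hcomp i, sub_zero] at h1
      have h2 : π₁ i v ∈ ⨆ k ∈ {k | prec k i}, Γ₁ k := TleS i h1
      have h3 : (⨆ k ∈ {k | prec k i}, Γ₁ k) ≤ ⨆ k ≠ i, Γ₁ k := by
        refine biSup_mono fun k hk => ?_
        rintro rfl; exact hirr _ hk
      exact (Submodule.disjoint_def.mp (h₁.1 i)) _ (π₁_mem i v) (h3 h2)
    have := π₁_sum v
    simp only [hzero] at this
    simpa using this.symm
  have hbij : Function.Bijective f := ⟨hinj, LinearMap.injective_iff_surjective.mp hinj⟩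
  refine ⟨LinearEquiv.ofBijective f hbij, ?_, ?_⟩
  · intro j v hv
    have h1 : LinearEquiv.ofBijective f hbij v - v = -(v - π₂ j v) := by
      rw [LinearEquiv.ofBijective_apply, f_on j v hv]; abel
    rw [h1]
    exact neg_mem (TleS j (hdiff j v hv))
  · intro i
    have hcoe : ((LinearEquiv.ofBijective f hbij : V ≃ₗ[ℂ] V) : V →ₗ[ℂ] V) = f := rfl
    have hle : ∀ i, (Γ₁ i).map f ≤ Γ₂ i := by
      rintro i _ ⟨w, hw, rfl⟩
      rw [f_on i w hw]
      exact π₂_mem i w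
    have hrk1 : ∀ i, finrank ℂ ↥((Γ₁ i).map f) = finrank ℂ ↥(Γ₁ i) := by
      intro i
      rw [← hcoe]
      exact LinearEquiv.finrank_map_eq _ _
    have hsum : ∑ i, finrank ℂ ↥(Γ₁ i) = ∑ i, finrank ℂ ↥(Γ₂ i) := by
      have t1 := myfinrank_biSup_set Γ₁ h₁.1 Set.univ
      have t2 := myfinrank_biSup_set Γ₂ h₂.1 Set.univ
      rw [show (⨆ j ∈ (Set.univ : Set I), Γ₁ j) = ⊤ by rw [← h₁.2]; simp] at t1
      rw [show (⨆ j ∈ (Set.univ : Set I), Γ₂ j) = ⊤ by rw [← h₂.2]; simp] at t2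
      simp only [Set.toFinset_univ] at t1 t2
      rw [← t1, ← t2]
    have heach : ∀ i ∈ Finset.univ, finrank ℂ ↥((Γ₁ i).map f) = finrank ℂ ↥(Γ₂ i) := by
      refine (Finset.sum_eq_sum_iff_of_le fun i _ => Submodule.finrank_mono (hle i)).mp ?_
      simp only [hrk1]
      exact hsum
    rw [hcoe]
    exact Submodule.eq_of_le_of_finrank_le (hle i)
      ((heach i (Finset.mem_univ i)).symm.le)


theorem sto_transfer_rev {prec : I → I → Prop} (hirr : ∀ i, ¬ prec i i)
    (htrans : ∀ i j k, prec i j → prec j k → prec i k)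
    {Γ₁ Γ₂ : I → Submodule ℂ V} (h₁ : iSupIndep Γ₁) (h₂ : iSupIndep Γ₂)
    {g : V ≃ₗ[ℂ] V} (hg : g ∈ Sto Γ₂ prec)
    (hmap : ∀ i, (Γ₁ i).map (g : V →ₗ[ℂ] V) = Γ₂ i) :
    g ∈ Sto Γ₁ prec := by
  have hginv : g.symm ∈ Sto Γ₂ prec := sto_inv htrans hg
  have hmap' : ∀ i, (Γ₂ i).map (g.symm : V →ₗ[ℂ] V) = Γ₁ i := by
    intro i
    rw [← hmap i, ← Submodule.map_comp]
    have hcomp : (g.symm : V →ₗ[ℂ] V) ∘ₗ (g : V →ₗ[ℂ] V) = LinearMap.id := by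
      ext x; simp
    rw [hcomp, Submodule.map_id]
  have : g.symm ∈ Sto Γ₁ prec := sto_transfer hirr htrans h₂ h₁ hginv hmap'
  have hfinal : g.symm.symm ∈ Sto Γ₁ prec := sto_inv htrans this
  simpa using hfinal


end Helpers

/-- for two gradings `Γ₁, Γ₂` and a strict partial order `≺` on `I`, the
following are equivalent: (1) some element of `Sto(Γ₁,≺)` takes `Γ₁` to `Γ₂`; (2) some
element of `Sto(Γ₂,≺)` takes `Γ₁` to `Γ₂`; (3) for every total order `≤` extending `≺`, the
associated filtrations of `Γ₁` and `Γ₂` agree. -/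
theorem stokes_conditions_equivalent
    (prec : I → I → Prop)
    (hirr : ∀ i, ¬ prec i i)
    (htrans : ∀ i j k, prec i j → prec j k → prec i k)
    (Γ₁ Γ₂ : I → Submodule ℂ V) (h₁ : IsGrading Γ₁) (h₂ : IsGrading Γ₂) :
    ((∃ g ∈ Sto Γ₁ prec, ∀ i, (Γ₁ i).map (g : V →ₗ[ℂ] V) = Γ₂ i) ↔
      (∀ le : I → I → Prop, IsLinearOrder I le → (∀ i j, prec i j → le i j ∧ ¬ le j i) →
        ∀ i, assocFilt Γ₁ le i = assocFilt Γ₂ le i)) ∧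
    ((∃ g ∈ Sto Γ₂ prec, ∀ i, (Γ₁ i).map (g : V →ₗ[ℂ] V) = Γ₂ i) ↔
      (∀ le : I → I → Prop, IsLinearOrder I le → (∀ i j, prec i j → le i j ∧ ¬ le j i) →
        ∀ i, assocFilt Γ₁ le i = assocFilt Γ₂ le i)) := by
  have hI1 := h₁.1
  have hI2 := h₂.1
  constructor
  · constructor
    · rintro ⟨g, hg, hmap⟩ le hlin hext i
      exact sto_imp_filt prec hI1 hI2 hg hmap le hlin hext i
    · intro h3
      exact exists_sto prec hirr htrans h₁ h₂ h3
  · constructor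
    · rintro ⟨g, hg, hmap⟩ le hlin hext i
      have hg1 : g ∈ Sto Γ₁ prec := sto_transfer_rev hirr htrans hI1 hI2 hg hmap
      exact sto_imp_filt prec hI1 hI2 hg1 hmap le hlin hext i
    · intro h3
      obtain ⟨g, hg, hmap⟩ := exists_sto prec hirr htrans h₁ h₂ h3
      exact ⟨g, sto_transfer hirr htrans hI1 hI2 hg hmap, hmap⟩
end

section
/- Let V be a finite-dimensional complex vector space, I a finite set, ≺ a strict partial order on I (irreflexive and transitive), and Γ₁, Γ₂ two I-gradings of V. Then there is at most one g ∈ GL(V) such that g(Γ₁(i)) = Γ₂(i) for all i ∈ I and g ∈ Sto(Γ₁,≺), i.e. (g − 1)(Γ₁(j)) ⊆ Σ_{i ≺ j} Γ₁(i) for all j ∈ I. -/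
open Submodule

variable {V : Type} [AddCommGroup V] [Module ℂ V] [FiniteDimensional ℂ V]
variable {I : Type} [Fintype I]

/-- there is at most one element of the Stokes group `Sto(Γ₁,≺)` taking the
grading `Γ₁` to the grading `Γ₂`. -/
theorem stokes_group_element_unique
    (prec : I → I → Prop)
    (hirr : ∀ i, ¬ prec i i)
    (htrans : ∀ i j k, prec i j → prec j k → prec i k)
    (Γ₁ Γ₂ : I → Submodule ℂ V) (h₁ : IsGrading Γ₁) (h₂ : IsGrading Γ₂)
    (g g' : V ≃ₗ[ℂ] V)
    (hg : g ∈ Sto Γ₁ prec) (hgΓ : ∀ i, (Γ₁ i).map (g : V →ₗ[ℂ] V) = Γ₂ i)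
    (hg' : g' ∈ Sto Γ₁ prec) (hg'Γ : ∀ i, (Γ₁ i).map (g' : V →ₗ[ℂ] V) = Γ₂ i) :
    g = g' := by
  set S : I → Submodule ℂ V := fun j => ⨆ i ∈ {i | prec i j}, Γ₁ i with hS
  have hSle : ∀ i j, prec i j → Γ₁ i ≤ S j := fun i j hij =>
    le_iSup₂ (f := fun i (_ : i ∈ {i | prec i j}) => Γ₁ i) i hij
  -- g' maps S j onto S j
  have hmaple : ∀ j, (S j).map (g' : V →ₗ[ℂ] V) ≤ S j := by
    intro j
    rw [hS, Submodule.map_iSup]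
    apply iSup_le; intro i
    rw [Submodule.map_iSup]
    apply iSup_le; intro hij
    rintro _ ⟨v, hv, rfl⟩
    have h1 : g' v - v ∈ ⨆ k ∈ {k | prec k i}, Γ₁ k := hg' i v hv
    have h2 : g' v - v ∈ S j := by
      refine (iSup₂_le fun k hk => hSle k j (htrans k i j hk hij)) h1
    have h3 : (v : V) ∈ S j := hSle i j hij hv
    have : (g' : V →ₗ[ℂ] V) v = (g' v - v) + v := by abel
    rw [this]; exact (S j).add_mem h2 h3
  have hmapeq : ∀ j, (S j).map (g' : V →ₗ[ℂ] V) = S j := by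
    intro j
    refine Submodule.eq_of_le_of_finrank_le (hmaple j) ?_
    rw [LinearEquiv.finrank_map_eq]
  -- key: g and g' agree on each Γ₁ j
  have hkey : ∀ j, ∀ v ∈ Γ₁ j, g v = g' v := by
    intro j v hv
    set d := g v - g' v with hd
    have hdS : d ∈ S j := by
      have : d = (g v - v) - (g' v - v) := by rw [hd]; abel
      rw [this]
      exact (S j).sub_mem (hg j v hv) (hg' j v hv)
    have hdΓ : d ∈ Γ₂ j := by
      have h1 : g v ∈ Γ₂ j := by rw [← hgΓ j]; exact ⟨v, hv, rfl⟩
      have h2 : g' v ∈ Γ₂ j := by rw [← hg'Γ j]; exact ⟨v, hv, rfl⟩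
      exact (Γ₂ j).sub_mem h1 h2
    -- pull back by g'
    have h1 : g'.symm d ∈ Γ₁ j := by
      rw [← hg'Γ j] at hdΓ
      obtain ⟨u, hu, hud⟩ := hdΓ
      have : g'.symm d = u := by rw [← hud]; exact g'.symm_apply_apply u
      rwa [this]
    have h2 : g'.symm d ∈ S j := by
      rw [← hmapeq j] at hdS
      obtain ⟨u, hu, hud⟩ := hdS
      have : g'.symm d = u := by rw [← hud]; exact g'.symm_apply_apply u
      rwa [this]
    have hne : S j ≤ ⨆ (i) (_ : i ≠ j), Γ₁ i := by
      refine iSup₂_le fun i hij => ?_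
      exact le_iSup₂ (f := fun i (_ : i ≠ j) => Γ₁ i) i (fun h => hirr j (h ▸ hij))
    have hdisj := h₁.1 j
    have h0 : g'.symm d = 0 := by
      have := hdisj.le_bot ⟨h1, hne h2⟩
      simpa using this
    have : d = 0 := by
      have := congrArg g' h0
      simpa using this
    have := sub_eq_zero.mp this
    exact this
  -- extend to all of V
  have : ∀ v : V, g v = g' v := by
    intro v
    have hv : v ∈ LinearMap.eqLocus (g : V →ₗ[ℂ] V) (g' : V →ₗ[ℂ] V) := by
      have htop : (⊤ : Submodule ℂ V) ≤
          LinearMap.eqLocus (g : V →ₗ[ℂ] V) (g' : V →ₗ[ℂ] V) := by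
        rw [← h₁.2]
        exact iSup_le fun i w hw => hkey i w hw
      exact htop trivial
    exact hv
  exact LinearEquiv.toLinearMap_injective (LinearMap.ext this)
end

section
/- Let V be a finite-dimensional complex vector space, I a finite set, ≺ a strict partial order on I (irreflexive and transitive), and Γ₁, Γ₂ two I-gradings of V. If there exists g ∈ Sto(Γ₁,≺) with g(Γ₁(i)) = Γ₂(i) for all i ∈ I, then the two Stokes groups coincide: Sto(Γ₁,≺) = Sto(Γ₂,≺). -/
open Submodule

variable {V : Type} [AddCommGroup V] [Module ℂ V] [FiniteDimensional ℂ V]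
variable {I : Type} [Fintype I]

private lemma stoS_mono {prec : I → I → Prop}
    (htrans : ∀ i j k, prec i j → prec j k → prec i k)
    (A : I → Submodule ℂ V) {i j : I} (hij : prec i j) :
    (⨆ k ∈ {k | prec k i}, A k) ≤ ⨆ k ∈ {k | prec k j}, A k := by
  refine iSup₂_le fun k hk => ?_
  exact le_iSup₂_of_le k (show k ∈ {k | prec k j} from htrans k i j hk hij) le_rfl

private lemma sto_subset_of (prec : I → I → Prop)
    (htrans : ∀ i j k, prec i j → prec j k → prec i k)
    (A B : I → Submodule ℂ V)
    (hsup : ∀ j, (⨆ i ∈ {i | prec i j}, A i) = ⨆ i ∈ {i | prec i j}, B i)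
    (hle : ∀ j, B j ≤ A j ⊔ ⨆ i ∈ {i | prec i j}, A i) :
    Sto A prec ⊆ Sto B prec := by
  intro h hA j v hv
  have key : ∀ j, (⨆ i ∈ {i | prec i j}, A i) ≤
      Submodule.comap ((h : V →ₗ[ℂ] V) - LinearMap.id) (⨆ i ∈ {i | prec i j}, A i) := by
    intro j
    refine iSup₂_le fun i hi => fun u hu => ?_
    simp only [Submodule.mem_comap, LinearMap.sub_apply, LinearMap.id_coe, id_eq,
      LinearEquiv.coe_coe]
    exact stoS_mono htrans A hi (hA i u hu)
  have hv' : v ∈ A j ⊔ ⨆ i ∈ {i | prec i j}, A i := hle j hv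
  rw [Submodule.mem_sup] at hv'
  obtain ⟨w, hw, s, hs, rfl⟩ := hv'
  have h1 : h w - w ∈ ⨆ i ∈ {i | prec i j}, A i := hA j w hw
  have h2 : h s - s ∈ ⨆ i ∈ {i | prec i j}, A i := key j hs
  have : h (w + s) - (w + s) = (h w - w) + (h s - s) := by
    simp [map_add]; abel
  rw [← hsup j]
  rw [this]
  exact Submodule.add_mem _ h1 h2

/-- if some element of `Sto(Γ₁,≺)` takes the grading `Γ₁` to the grading `Γ₂`,
then the two Stokes groups coincide: `Sto(Γ₁,≺) = Sto(Γ₂,≺)`. -/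
theorem stokes_groups_coincide
    (prec : I → I → Prop)
    (hirr : ∀ i, ¬ prec i i)
    (htrans : ∀ i j k, prec i j → prec j k → prec i k)
    (Γ₁ Γ₂ : I → Submodule ℂ V) (h₁ : IsGrading Γ₁) (h₂ : IsGrading Γ₂)
    (hex : ∃ g ∈ Sto Γ₁ prec, ∀ i, (Γ₁ i).map (g : V →ₗ[ℂ] V) = Γ₂ i) :
    Sto Γ₁ prec = Sto Γ₂ prec := by
  obtain ⟨g, hg, hmap⟩ := hex
  set S : I → Submodule ℂ V := fun j => ⨆ i ∈ {i | prec i j}, Γ₁ i with hS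
  set T : I → Submodule ℂ V := fun j => ⨆ i ∈ {i | prec i j}, Γ₂ i with hT
  have hB : ∀ i, Γ₂ i ≤ Γ₁ i ⊔ S i := by
    intro i v hv
    rw [← hmap i, Submodule.mem_map] at hv
    obtain ⟨u, hu, rfl⟩ := hv
    have : (g : V →ₗ[ℂ] V) u = u + (g u - u) := by simp
    rw [this]
    exact Submodule.add_mem _ (Submodule.mem_sup_left hu)
      (Submodule.mem_sup_right (hg i u hu))
  have hC : ∀ i, Γ₁ i ≤ Γ₂ i ⊔ S i := by
    intro i u hu
    have : u = (g : V →ₗ[ℂ] V) u - (g u - u) := by simp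
    rw [this]
    refine Submodule.sub_mem _ (Submodule.mem_sup_left ?_)
      (Submodule.mem_sup_right (hg i u hu))
    rw [← hmap i]
    exact Submodule.mem_map_of_mem hu
  letI : IsTrans I prec := ⟨fun a b c => htrans a b c⟩
  letI : IsIrrefl I prec := ⟨hirr⟩
  have wf : WellFounded prec := Finite.wellFounded_of_trans_of_irrefl prec
  have hD : ∀ j, S j = T j := by
    intro j
    induction j using wf.induction with
    | _ j ih =>
      apply le_antisymm
      · refine iSup₂_le fun i hi => ?_
        calc Γ₁ i ≤ Γ₂ i ⊔ S i := hC i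
          _ = Γ₂ i ⊔ T i := by rw [ih i hi]
          _ ≤ T j ⊔ T j := sup_le_sup (le_iSup₂_of_le i (show i ∈ {k | prec k j} from hi) le_rfl)
              (stoS_mono htrans Γ₂ hi)
          _ = T j := sup_idem _
      · refine iSup₂_le fun i hi => ?_
        calc Γ₂ i ≤ Γ₁ i ⊔ S i := hB i
          _ ≤ S j ⊔ S j := sup_le_sup (le_iSup₂_of_le i (show i ∈ {k | prec k j} from hi) le_rfl)
              (stoS_mono htrans Γ₁ hi)
          _ = S j := sup_idem _
  apply le_antisymm
  · exact sto_subset_of prec htrans Γ₁ Γ₂ (fun j => hD j) hB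
  · refine sto_subset_of prec htrans Γ₂ Γ₁ (fun j => (hD j).symm) fun j => ?_
    calc Γ₁ j ≤ Γ₂ j ⊔ S j := hC j
      _ = Γ₂ j ⊔ T j := by rw [hD j]
end

section
/- Let V be a finite-dimensional complex vector space, I a finite set with a total order ≤, F an I-filtration of V, and Γ an I-grading of V splitting F. Then every g ∈ GL(V) with g(F(i)) = F(i) for all i ∈ I factors uniquely as g = u ∘ h, where h ∈ GL(V) satisfies h(Γ(i)) = Γ(i) for all i and u ∈ GL(V) satisfies (u − 1)(F(i)) ⊆ F(<i) for all i. (The parabolic group of filtered automorphisms is the product of its unipotent radical and the graded automorphism group.) -/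
open Submodule

variable {V : Type} [AddCommGroup V] [Module ℂ V] [FiniteDimensional ℂ V]
variable {I : Type} [Fintype I]

/-- Levi decomposition of the parabolic subgroup of filtered automorphisms:
if `Γ` splits `F`, every automorphism `g` preserving `F` factors uniquely as `g = u ∘ h`
with `h` a graded automorphism of `(V,Γ)` and `u ∈ U(F)`. -/
theorem parabolic_levi_decomposition
    (le : I → I → Prop) (hle : IsLinearOrder I le)
    (F Γ : I → Submodule ℂ V) (hF : IsIFiltration le F) (hΓ : SplitsF le F Γ)
    (g : V ≃ₗ[ℂ] V) (hg : ∀ i, (F i).map (g : V →ₗ[ℂ] V) = F i) :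
    ∃! p : (V ≃ₗ[ℂ] V) × (V ≃ₗ[ℂ] V),
      p.1 ∈ Ugrp le F ∧
      (∀ i, (Γ i).map (p.2 : V →ₗ[ℂ] V) = Γ i) ∧
      ∀ v, p.1 (p.2 v) = g v := by
  classical
  haveI : IsLinearOrder I le := hle
  obtain ⟨⟨hind, hsup⟩, hsplit⟩ := hΓ
  have hInt : DirectSum.IsInternal Γ :=
    (DirectSum.isInternal_submodule_iff_iSupIndep_and_iSup_eq_top Γ).2 ⟨hind, hsup⟩
  set e := LinearEquiv.ofBijective (DirectSum.coeLinearMap Γ) hInt with he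
  set p : I → (V →ₗ[ℂ] V) := fun i =>
    (Γ i).subtype ∘ₗ (DirectSum.component ℂ I (fun i => ↥(Γ i)) i) ∘ₗ
      (e.symm : V →ₗ[ℂ] _) with hp
  have hpapply : ∀ i v, p i v = ((e.symm v) i : V) := fun _ _ => rfl
  have hpmem : ∀ i v, p i v ∈ Γ i := fun i v => ((e.symm v) i).2
  -- sum of projections is the identity
  have hpsum : ∀ v : V, ∑ i : I, p i v = v := by
    intro v
    have h1 : DirectSum.coeLinearMap Γ (e.symm v) = v := e.apply_symm_apply v
    conv_rhs => rw [← h1, ← DirectSum.sum_univ_of (e.symm v)]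
    rw [map_sum]
    simp [hpapply]
  -- projection of a graded vector
  have hpof : ∀ i v, v ∈ Γ i → p i v = v := by
    intro i v hv
    rw [hpapply, hInt.ofBijective_coeLinearMap_of_mem hv]
  have hpne : ∀ i j, j ≠ i → ∀ v ∈ Γ i, p j v = 0 := by
    intro i j hji v hv
    have : e.symm v = e.symm ((⟨v, hv⟩ : Γ i) : V) := rfl
    rw [hpapply, this, hInt.ofBijective_coeLinearMap_of_ne (Ne.symm hji)]
    rfl
  -- basic inclusions
  have hΓF : ∀ j, Γ j ≤ F j := by
    intro j
    rw [hsplit j]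
    exact le_iSup₂ (f := fun k (_ : k ∈ {k | le k j}) => Γ k) j (refl_of le j)
  have hLTleF : ∀ i, filtLT le F i ≤ F i := by
    intro i
    exact iSup₂_le fun j hj => hF j i hj.1
  have hLTmono : ∀ i j, le j i → filtLT le F j ≤ filtLT le F i := by
    intro i j hji
    refine iSup₂_le fun k hk => ?_
    have h1 : le k i := IsTrans.trans _ _ _ hk.1 hji
    have h2 : k ≠ i := by
      rintro rfl
      exact hk.2 (antisymm hk.1 hji)
    exact le_iSup₂ (f := fun k (_ : k ∈ {k | le k i ∧ k ≠ i}) => F k) k ⟨h1, h2⟩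
  have hLTΓ : ∀ i, filtLT le F i ≤ ⨆ j, ⨆ (_ : j ≠ i), Γ j := by
    intro i
    refine iSup₂_le fun j hj => ?_
    rw [hsplit j]
    refine iSup₂_le fun k hk => ?_
    have : k ≠ i := by
      rintro rfl
      exact hj.2 (antisymm hj.1 hk)
    exact le_iSup₂ (f := fun k (_ : k ≠ i) => Γ k) k this
  -- vanishing of out-of-range projections on F i
  have hpF : ∀ i j, ¬ le j i → ∀ v ∈ F i, p j v = 0 := by
    intro i j hji v hv
    rw [hsplit i] at hv
    have hle' : assocFilt Γ le i ≤ LinearMap.ker (p j) := by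
      refine iSup₂_le fun k hk => ?_
      intro w hw
      have hkj : k ≠ j := by rintro rfl; exact hji hk
      exact LinearMap.mem_ker.2 (hpne k j (Ne.symm hkj) w hw)
    exact LinearMap.mem_ker.1 (hle' hv)
  -- membership versions of g-invariance
  have hgmem : ∀ i v, v ∈ F i → g v ∈ F i := by
    intro i v hv
    rw [← hg i]
    exact Submodule.mem_map_of_mem hv
  have hgsymm : ∀ i v, v ∈ F i → g.symm v ∈ F i := by
    intro i v hv
    rw [← hg i] at hv
    obtain ⟨w, hw, rfl⟩ := hv
    simpa using hw
  have hgLT : ∀ i, (filtLT le F i).map (g : V →ₗ[ℂ] V) = filtLT le F i := by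
    intro i
    simp only [filtLT, Submodule.map_iSup, hg]
  have hgsymmLT : ∀ i v, v ∈ filtLT le F i → g.symm v ∈ filtLT le F i := by
    intro i v hv
    rw [← hgLT i] at hv
    obtain ⟨w, hw, rfl⟩ := hv
    simpa using hw
  -- decomposition of a vector of F i
  have hdecomp : ∀ i v, v ∈ F i → v - p i v ∈ filtLT le F i := by
    intro i v hv
    have hsum := hpsum v
    rw [← Finset.add_sum_erase _ _ (Finset.mem_univ i)] at hsum
    rw [← eq_sub_of_add_eq' hsum]
    refine Submodule.sum_mem _ fun j hj => ?_
    by_cases hji : le j i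
    · have hjne : j ≠ i := (Finset.mem_erase.1 hj).1
      have : F j ≤ filtLT le F i :=
        le_iSup₂ (f := fun k (_ : k ∈ {k | le k i ∧ k ≠ i}) => F k) j ⟨hji, hjne⟩
      exact this (hΓF j (hpmem j v))
    · rw [hpF i j hji v hv]; exact zero_mem _
  -- the graded part hlin of g
  set G : V →ₗ[ℂ] V := (g : V →ₗ[ℂ] V) with hG
  set hlin : V →ₗ[ℂ] V := ∑ i : I, (p i) ∘ₗ G ∘ₗ (p i) with hhlin
  have hlinapply : ∀ v, hlin v = ∑ i : I, p i (G (p i v)) := by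
    intro v; rw [hhlin]; simp
  have hlinΓ : ∀ i v, v ∈ Γ i → hlin v = p i (G v) := by
    intro i v hv
    rw [hlinapply]
    rw [Finset.sum_eq_single_of_mem i (Finset.mem_univ i)]
    · rw [hpof i v hv]
    · intro j _ hji
      rw [hpne i j hji v hv]
      simp
  -- key vanishing lemma
  have hkey : ∀ j v, v ∈ Γ j → p j (G v) = 0 → v = 0 := by
    intro j v hv h0
    have h1 : G v ∈ F j := hgmem j v (hΓF j hv)
    have h2 : G v - p j (G v) ∈ filtLT le F j := hdecomp j _ h1
    rw [h0, sub_zero] at h2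
    have h3 : v ∈ filtLT le F j := by
      have h2' := hgsymmLT j _ h2
      rwa [show G v = g v from rfl, g.symm_apply_apply] at h2'
    have h4 : v ∈ Γ j ⊓ ⨆ k, ⨆ (_ : k ≠ j), Γ k := ⟨hv, hLTΓ j h3⟩
    have h5 := hind j
    rw [disjoint_iff] at h5
    rw [h5] at h4
    exact h4
  have hinj : Function.Injective hlin := by
    rw [← LinearMap.ker_eq_bot]
    rw [Submodule.eq_bot_iff]
    intro v hv
    rw [LinearMap.mem_ker] at hv
    have hcomp : ∀ j, p j (G (p j v)) = 0 := by
      intro j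
      have h1 : p j (hlin v) = 0 := by rw [hv]; simp
      rw [hlinapply, map_sum] at h1
      rw [Finset.sum_eq_single_of_mem j (Finset.mem_univ j)] at h1
      · rw [← h1, hpof j _ (hpmem j _)]
      · intro k _ hkj
        exact hpne k j hkj.symm _ (hpmem k _)
    have hz : ∀ j, p j v = 0 := fun j => hkey j _ (hpmem j v) (hcomp j)
    have := hpsum v
    rw [Finset.sum_eq_zero (fun j _ => hz j)] at this
    exact this.symm
  have hbij : Function.Bijective hlin :=
    ⟨hinj, (LinearMap.injective_iff_surjective).1 hinj⟩
  set h : V ≃ₗ[ℂ] V := LinearEquiv.ofBijective hlin hbij with hh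
  have happly : ∀ v, h v = hlin v := fun _ => rfl
  -- h preserves the grading
  have hmapΓ : ∀ i, (Γ i).map (h : V →ₗ[ℂ] V) = Γ i := by
    intro i
    have hle' : (Γ i).map (h : V →ₗ[ℂ] V) ≤ Γ i := by
      rintro _ ⟨w, hw, rfl⟩
      have : h w = p i (G w) := by rw [happly, hlinΓ i w hw]
      rw [show ((h : V →ₗ[ℂ] V) w) = h w from rfl, this]
      exact hpmem i _
    refine Submodule.eq_of_le_of_finrank_le hle' ?_
    rw [LinearEquiv.finrank_map_eq h (Γ i)]
  -- a grading-preserving equivalence preserves F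
  have hmapF : ∀ (k : V ≃ₗ[ℂ] V), (∀ i, (Γ i).map (k : V →ₗ[ℂ] V) = Γ i) →
      ∀ i, (F i).map (k : V →ₗ[ℂ] V) = F i := by
    intro k hk i
    rw [hsplit i]
    simp only [assocFilt, Submodule.map_iSup, hk]
  have hmapFh := hmapF h hmapΓ
  have hsymmFh : ∀ i v, v ∈ F i → h.symm v ∈ F i := by
    intro i v hv
    rw [← hmapFh i] at hv
    obtain ⟨w, hw, rfl⟩ := hv
    simpa using hw
  -- the unipotent part
  set u : V ≃ₗ[ℂ] V := h.symm.trans g with hu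
  have huapply : ∀ v, u v = g (h.symm v) := fun _ => rfl
  have huU : u ∈ Ugrp le F := by
    intro i v hv
    set w := h.symm v with hw
    have hwF : w ∈ F i := hsymmFh i v hv
    have h1 : u v = ∑ j : I, G (p j w) := by
      rw [huapply, ← hw, show (g w : V) = G w from rfl, ← map_sum, hpsum w]
    have h2 : v = ∑ j : I, p j (G (p j w)) := by
      have : v = h w := by rw [hw, h.apply_symm_apply]
      rw [this, happly, hlinapply]
    rw [h1, h2, ← Finset.sum_sub_distrib]
    refine Submodule.sum_mem _ fun j _ => ?_
    by_cases hji : le j i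
    · have hx : G (p j w) ∈ F j := hgmem j _ (hΓF j (hpmem j w))
      exact hLTmono i j hji (hdecomp j _ hx)
    · rw [hpF i j hji w hwF]
      simp
  have hcomm : ∀ v, u (h v) = g v := by
    intro v
    rw [huapply, h.symm_apply_apply]
  refine ⟨(u, h), ⟨huU, hmapΓ, hcomm⟩, ?_⟩
  -- uniqueness
  rintro ⟨u', h'⟩ ⟨hu', hh', hcomm'⟩
  -- u' preserves F
  have hu'F : ∀ i v, v ∈ F i → u' v ∈ F i := by
    intro i v hv
    have : u' v = v + (u' v - v) := by abel
    rw [this]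
    exact Submodule.add_mem _ hv (hLTleF i (hu' i v hv))
  have hu'Feq : ∀ i, (F i).map (u' : V →ₗ[ℂ] V) = F i := by
    intro i
    refine Submodule.eq_of_le_of_finrank_le ?_ ?_
    · rintro _ ⟨w, hw, rfl⟩; exact hu'F i w hw
    · rw [LinearEquiv.finrank_map_eq u' (F i)]
  have hu'symmF : ∀ i v, v ∈ F i → u'.symm v ∈ F i := by
    intro i v hv
    rw [← hu'Feq i] at hv
    obtain ⟨w, hw, rfl⟩ := hv
    simpa using hw
  have hu'symmU : ∀ i v, v ∈ F i → u'.symm v - v ∈ filtLT le F i := by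
    intro i v hv
    have h1 : u' (u'.symm v) - u'.symm v ∈ filtLT le F i := hu' i _ (hu'symmF i v hv)
    rw [u'.apply_symm_apply] at h1
    have : u'.symm v - v = -(v - u'.symm v) := by abel
    rw [this]
    exact Submodule.neg_mem _ h1
  dsimp only at hu' hh' hcomm'
  -- the comparison automorphism fixes each graded piece
  have hkx : ∀ i x, x ∈ Γ i → h' (h.symm x) = x := by
    intro i x hx
    have hxF : x ∈ F i := hΓF i hx
    have hk1 : h' (h.symm x) = u'.symm (u x) := by
      have h5 : u' (h' (h.symm x)) = u x := by
        rw [hcomm' (h.symm x), huapply]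
      rw [← h5, u'.symm_apply_apply]
    have hsx : h.symm x ∈ Γ i := by
      have hx2 := hx
      rw [← hmapΓ i] at hx2
      obtain ⟨w, hw, hwe⟩ := hx2
      have : h.symm x = w := by
        rw [← hwe]; exact h.symm_apply_apply w
      rwa [this]
    have hkΓ : h' (h.symm x) ∈ Γ i := by
      rw [← hh' i]
      exact Submodule.mem_map_of_mem hsx
    have h6 : u x - x ∈ filtLT le F i := huU i x hxF
    have h7 : u x ∈ F i := by
      have hux : u x = x + (u x - x) := by abel
      rw [hux]
      exact Submodule.add_mem _ hxF (hLTleF i h6)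
    have h8 : u'.symm (u x) - u x ∈ filtLT le F i := hu'symmU i _ h7
    have hdiff : h' (h.symm x) - x ∈ filtLT le F i := by
      rw [hk1]
      have hd : u'.symm (u x) - x = (u'.symm (u x) - u x) + (u x - x) := by abel
      rw [hd]
      exact Submodule.add_mem _ h8 h6
    have h9 : h' (h.symm x) - x ∈ Γ i := Submodule.sub_mem _ hkΓ hx
    have h10 : h' (h.symm x) - x ∈ Γ i ⊓ ⨆ k, ⨆ (_ : k ≠ i), Γ k :=
      ⟨h9, hLTΓ i hdiff⟩
    have h11 := hind i
    rw [disjoint_iff] at h11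
    rw [h11] at h10
    have h12 : h' (h.symm x) - x = 0 := h10
    exact sub_eq_zero.1 h12
  have hh'eq : h' = h := by
    refine LinearEquiv.ext fun v => ?_
    have htop : (⊤ : Submodule ℂ V) ≤
        LinearMap.eqLocus (h' : V →ₗ[ℂ] V) (h : V →ₗ[ℂ] V) := by
      rw [← hsup]
      refine iSup_le fun i w hw => ?_
      have hhw : h w ∈ Γ i := by
        rw [← hmapΓ i]; exact Submodule.mem_map_of_mem hw
      have := hkx i (h w) hhw
      rw [h.symm_apply_apply] at this
      exact this
    exact htop Submodule.mem_top
  have hu'eq : u' = u := by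
    refine LinearEquiv.ext fun x => ?_
    have hc2 : ∀ v, u' (h v) = g v := by
      intro v; rw [← hh'eq]; exact hcomm' v
    have h13 := hc2 (h.symm x)
    rw [h.apply_symm_apply] at h13
    rw [h13, huapply]
  rw [hu'eq, hh'eq]
end
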